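/- arXiv:1308.0521 — 5 statements merged into one kernel-verified Lean document; each statement's English description precedes it below -/
import Mathlib

section
/- Let X₁, X₂ be independent St. Petersburg random variables. Then for integers 1 ≤ k < ℓ, P{X₁ + X₂ > 2^k + 2^ℓ} = 2·2^{-ℓ} + 2·2^{-(ℓ+k)} - 4·2^{-2ℓ}, and for k = ℓ, P{X₁ + X₂ > 2^ℓ + 2^ℓ} = 2·2^{-ℓ} - 2^{-2ℓ}. -/
open MeasureTheory ProbabilityTheory Real
open scoped ENNReal
open scoped ENNReal

lemma sum_geom_from (m : ℕ) :
    ∑' j : ℕ, (if m ≤ j then ((2:ℝ≥0∞)^(j+1))⁻¹ else 0) = (2^m)⁻¹ := by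
  induction m with
  | zero =>
    simp only [Nat.zero_le, if_true, pow_zero, inv_one]
    have : ∀ j : ℕ, ((2:ℝ≥0∞)^(j+1))⁻¹ = 2⁻¹ * (2⁻¹)^j := by
      intro j; rw [pow_succ, ENNReal.mul_inv (by simp) (by simp), ← ENNReal.inv_pow]; ring
    simp_rw [this]
    rw [ENNReal.tsum_mul_left, ENNReal.tsum_geometric, ENNReal.one_sub_inv_two, inv_inv,
      ENNReal.inv_mul_cancel (by simp) (by simp)]
  | succ n ih =>
    have hsplit : ∀ j : ℕ, (if n ≤ j then ((2:ℝ≥0∞)^(j+1))⁻¹ else 0)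
        = (if j = n then ((2:ℝ≥0∞)^(j+1))⁻¹ else 0)
          + (if n+1 ≤ j then ((2:ℝ≥0∞)^(j+1))⁻¹ else 0) := by
      intro j
      rcases lt_trichotomy j n with h | h | h
      · have h1 : ¬ n ≤ j := by omega
        have h2 : ¬ j = n := by omega
        have h3 : ¬ n + 1 ≤ j := by omega
        simp [h1, h2, h3]
      · have h3 : ¬ n + 1 ≤ j := by omega
        simp [h, h3]
      · have h1 : n ≤ j := by omega
        have h2 : ¬ j = n := by omega
        have h3 : n + 1 ≤ j := by omega
        simp [h1, h2, h3]
    have h2 : ∑' j : ℕ, ((if j = n then ((2:ℝ≥0∞)^(j+1))⁻¹ else 0)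
          + (if n+1 ≤ j then ((2:ℝ≥0∞)^(j+1))⁻¹ else 0)) = (2^n)⁻¹ := by
      rw [← ih]; exact tsum_congr fun j => (hsplit j).symm
    rw [ENNReal.tsum_add, tsum_eq_single n (by intro b hb; simp [hb])] at h2
    simp only [if_true] at h2
    have hpow : ((2:ℝ≥0∞)^(n+1))⁻¹ + (2^(n+1))⁻¹ = (2^n)⁻¹ := by
      rw [← two_mul, pow_succ, mul_comm ((2:ℝ≥0∞)^n) 2,
        ENNReal.mul_inv (by simp) (by simp), ← mul_assoc,
        ENNReal.mul_inv_cancel (by simp) (by simp), one_mul]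
    rw [hpow.symm] at h2
    exact (ENNReal.add_right_inj (by simp)).mp h2

lemma sum_geom_between (m n : ℕ) (h : m ≤ n) :
    ∑' j : ℕ, (if m ≤ j ∧ j < n then ((2:ℝ≥0∞)^(j+1))⁻¹ else 0)
      = (2^m)⁻¹ - (2^n)⁻¹ := by
  have hsplit : ∀ j : ℕ, (if m ≤ j then ((2:ℝ≥0∞)^(j+1))⁻¹ else 0)
      = (if m ≤ j ∧ j < n then ((2:ℝ≥0∞)^(j+1))⁻¹ else 0)
        + (if n ≤ j then ((2:ℝ≥0∞)^(j+1))⁻¹ else 0) := by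
    intro j
    rcases Nat.lt_or_ge j m with hj | hj
    · have h1 : ¬ m ≤ j := by omega
      have h2 : ¬ (m ≤ j ∧ j < n) := by omega
      have h3 : ¬ n ≤ j := by omega
      simp [h1, h2, h3]
    · rcases Nat.lt_or_ge j n with hj2 | hj2
      · have h2 : m ≤ j ∧ j < n := by omega
        have h3 : ¬ n ≤ j := by omega
        simp [hj, h2, h3]
      · have h2 : ¬ (m ≤ j ∧ j < n) := by omega
        have h4 : ¬ j < n := by omega
        simp [hj, h2, h4, hj2]
  have hG := sum_geom_from m
  rw [tsum_congr hsplit, ENNReal.tsum_add, sum_geom_from n] at hG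
  exact ENNReal.eq_sub_of_add_eq (by simp) hG

open scoped Classical in
lemma measure_mem {Ω : Type*} [MeasureSpace Ω] [IsProbabilityMeasure (ℙ : Measure Ω)]
    (X : Ω → ℝ) (hX : Measurable X)
    (hpmf : ∀ k : ℕ, 1 ≤ k → ℙ {ω | X ω = 2 ^ k} = 1 / 2 ^ k)
    (S : Set ℝ) :
    ℙ (X ⁻¹' S) = ∑' j : ℕ, (if (2:ℝ)^(j+1) ∈ S then ((2:ℝ≥0∞)^(j+1))⁻¹ else 0) := by
  classical
  set D : Set Ω := ⋃ j : ℕ, {ω | X ω = 2^(j+1)} with hD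
  have hmeas : ∀ j : ℕ, MeasurableSet {ω | X ω = (2:ℝ)^(j+1)} :=
    fun j => hX (measurableSet_singleton _)
  have hdisj : Pairwise (Function.onFun Disjoint (fun j : ℕ => {ω | X ω = (2:ℝ)^(j+1)})) := by
    intro i j hij
    refine Set.disjoint_left.mpr fun ω h1 h2 => hij ?_
    have h3 : (2:ℝ)^(i+1) = 2^(j+1) := by
      rw [← Set.mem_setOf_eq.mp h1, ← Set.mem_setOf_eq.mp h2]
    have := pow_right_injective₀ (by norm_num : (0:ℝ) < 2) (by norm_num) h3
    omega
  have hDmeas : MeasurableSet D := MeasurableSet.iUnion hmeas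
  have hDfull : ℙ D = 1 := by
    rw [hD, measure_iUnion hdisj hmeas]
    have hv : ∀ j : ℕ, ℙ {ω | X ω = (2:ℝ)^(j+1)} = ((2:ℝ≥0∞)^(j+1))⁻¹ := fun j => by
      rw [hpmf (j+1) (by omega), one_div]
    simp_rw [hv]
    simpa using sum_geom_from 0
  have hDc : ℙ Dᶜ = 0 := by
    rw [measure_compl hDmeas (measure_ne_top _ _), hDfull]; simp
  rw [(measure_inter_conull hDc).symm]
  have hset : X ⁻¹' S ∩ D
      = ⋃ j : ℕ, (if (2:ℝ)^(j+1) ∈ S then {ω | X ω = (2:ℝ)^(j+1)} else ∅) := by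
    ext ω
    simp only [Set.mem_inter_iff, Set.mem_preimage, hD, Set.mem_iUnion, Set.mem_setOf_eq]
    constructor
    · rintro ⟨hS, j, hj⟩
      refine ⟨j, ?_⟩
      rw [if_pos (hj ▸ hS)]
      exact hj
    · rintro ⟨j, hj⟩
      by_cases hc : (2:ℝ)^(j+1) ∈ S
      · rw [if_pos hc] at hj
        have hj' : X ω = (2:ℝ)^(j+1) := hj
        exact ⟨hj' ▸ hc, j, hj'⟩
      · rw [if_neg hc] at hj
        exact absurd hj (Set.notMem_empty ω)
  rw [hset, measure_iUnion ?_ ?_]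
  · refine tsum_congr fun j => ?_
    by_cases hc : (2:ℝ)^(j+1) ∈ S
    · rw [if_pos hc, if_pos hc, hpmf (j+1) (by omega), one_div]
    · rw [if_neg hc, if_neg hc, measure_empty]
  · intro i j hij
    refine (hdisj hij).mono ?_ ?_ <;>
    · dsimp only
      split_ifs
      exacts [le_rfl, bot_le]
  · intro j
    split_ifs
    exacts [hmeas j, MeasurableSet.empty]

section Events
variable {Ω : Type*} [MeasureSpace Ω] [IsProbabilityMeasure (ℙ : Measure Ω)]
  (X : Ω → ℝ) (hX : Measurable X)
  (hpmf : ∀ k : ℕ, 1 ≤ k → ℙ {ω | X ω = 2 ^ k} = 1 / 2 ^ k)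

open scoped Classical

lemma hlt' (A B : ℕ) : (2:ℝ)^A < 2^B ↔ A < B := pow_lt_pow_iff_right₀ one_lt_two
lemma hle' (A B : ℕ) : (2:ℝ)^A ≤ 2^B ↔ A ≤ B := pow_le_pow_iff_right₀ one_lt_two

include hX hpmf

lemma meas_Ioi (m : ℕ) : ℙ (X ⁻¹' Set.Ioi ((2:ℝ)^m)) = (2^m)⁻¹ := by
  rw [measure_mem X hX hpmf, ← sum_geom_from m]
  refine tsum_congr fun j => ?_
  have : ((2:ℝ)^(j+1) ∈ Set.Ioi ((2:ℝ)^m)) ↔ m ≤ j := by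
    rw [Set.mem_Ioi, hlt']; omega
  simp only [this]

lemma meas_Iic (n : ℕ) : ℙ (X ⁻¹' Set.Iic ((2:ℝ)^n)) = 1 - (2^n)⁻¹ := by
  rw [measure_mem X hX hpmf]
  have h := sum_geom_between 0 n (Nat.zero_le n)
  simp only [pow_zero, inv_one] at h
  rw [← h]
  refine tsum_congr fun j => ?_
  have : ((2:ℝ)^(j+1) ∈ Set.Iic ((2:ℝ)^n)) ↔ (0 ≤ j ∧ j < n) := by
    rw [Set.mem_Iic, hle']; omega
  simp only [this]

lemma meas_Ioc (k n : ℕ) (h : k ≤ n) :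
    ℙ (X ⁻¹' Set.Ioc ((2:ℝ)^k) ((2:ℝ)^n)) = (2^k)⁻¹ - (2^n)⁻¹ := by
  rw [measure_mem X hX hpmf, ← sum_geom_between k n h]
  refine tsum_congr fun j => ?_
  have : ((2:ℝ)^(j+1) ∈ Set.Ioc ((2:ℝ)^k) ((2:ℝ)^n)) ↔ (k ≤ j ∧ j < n) := by
    rw [Set.mem_Ioc, hlt', hle']; omega
  simp only [this]

lemma meas_Ioo (k m : ℕ) (h : k ≤ m) :
    ℙ (X ⁻¹' Set.Ioo ((2:ℝ)^k) ((2:ℝ)^(m+1))) = (2^k)⁻¹ - (2^m)⁻¹ := by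
  rw [measure_mem X hX hpmf, ← sum_geom_between k m h]
  refine tsum_congr fun j => ?_
  have : ((2:ℝ)^(j+1) ∈ Set.Ioo ((2:ℝ)^k) ((2:ℝ)^(m+1))) ↔ (k ≤ j ∧ j < m) := by
    rw [Set.mem_Ioo, hlt', hlt']; omega
  simp only [this]

lemma meas_single (n : ℕ) (h : 1 ≤ n) : ℙ (X ⁻¹' {(2:ℝ)^n}) = (2^n)⁻¹ := by
  have hs : X ⁻¹' {(2:ℝ)^n} = {ω | X ω = 2^n} := by ext ω; simp [Set.mem_preimage]
  rw [hs, hpmf n h, one_div]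

lemma dyadic_compl : ℙ {ω | ∀ j : ℕ, X ω ≠ 2^(j+1)} = 0 := by
  have hs : {ω | ∀ j : ℕ, X ω ≠ 2^(j+1)} = (X ⁻¹' {x | ∃ j : ℕ, x = (2:ℝ)^(j+1)})ᶜ := by
    ext ω; simp [Set.mem_preimage]
  have hfull : ℙ (X ⁻¹' {x | ∃ j : ℕ, x = (2:ℝ)^(j+1)}) = 1 := by
    rw [measure_mem X hX hpmf]
    have h0 := sum_geom_from 0
    simp only [pow_zero, inv_one] at h0
    rw [← h0]
    refine tsum_congr fun j => ?_
    have : ((2:ℝ)^(j+1) ∈ {x | ∃ j : ℕ, x = (2:ℝ)^(j+1)}) ↔ (0 ≤ j) := by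
      simp only [Set.mem_setOf_eq, Nat.zero_le, iff_true]; exact ⟨j, rfl⟩
    simp only [this]
  have hmeas : MeasurableSet (X ⁻¹' {x | ∃ j : ℕ, x = (2:ℝ)^(j+1)}) := by
    have : {x | ∃ j : ℕ, x = (2:ℝ)^(j+1)} = ⋃ j : ℕ, {(2:ℝ)^(j+1)} := by
      ext x; simp [eq_comm]
    rw [this]
    exact hX (MeasurableSet.iUnion fun j => measurableSet_singleton _)
  rw [hs, measure_compl hmeas (measure_ne_top _ _), hfull]
  simp

end Events


theorem stmt_2 {Ω : Type*} [MeasureSpace Ω] [IsProbabilityMeasure (ℙ : Measure Ω)]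
    (X₁ X₂ : Ω → ℝ) (hX₁ : Measurable X₁) (hX₂ : Measurable X₂)
    (hind : IndepFun X₁ X₂ ℙ)
    (hpmf₁ : ∀ k : ℕ, 1 ≤ k → ℙ {ω | X₁ ω = 2 ^ k} = 1 / 2 ^ k)
    (hpmf₂ : ∀ k : ℕ, 1 ≤ k → ℙ {ω | X₂ ω = 2 ^ k} = 1 / 2 ^ k) :
    (∀ k ℓ : ℕ, 1 ≤ k → k < ℓ →
      (ℙ {ω | X₁ ω + X₂ ω > 2 ^ k + 2 ^ ℓ}).toReal
        = 2 / 2 ^ ℓ + 2 / 2 ^ (ℓ + k) - 4 / 2 ^ (2 * ℓ)) ∧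
    (∀ ℓ : ℕ, 1 ≤ ℓ →
      (ℙ {ω | X₁ ω + X₂ ω > 2 ^ ℓ + 2 ^ ℓ}).toReal
        = 2 / 2 ^ ℓ - 1 / 2 ^ (2 * ℓ)) := by

  have hp : ∀ n : ℕ, (0:ℝ) < 2^n := fun n => pow_pos two_pos n
  have hDc : ℙ ({ω | ∃ a : ℕ, X₁ ω = 2^(a+1)} ∩ {ω | ∃ b : ℕ, X₂ ω = 2^(b+1)})ᶜ = 0 := by
    rw [Set.compl_inter]
    refine measure_union_null ?_ ?_
    · rw [show {ω | ∃ a : ℕ, X₁ ω = 2^(a+1)}ᶜ = {ω | ∀ j : ℕ, X₁ ω ≠ 2^(j+1)} from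
        Set.ext fun ω => by simp]
      exact dyadic_compl X₁ hX₁ hpmf₁
    · rw [show {ω | ∃ b : ℕ, X₂ ω = 2^(b+1)}ᶜ = {ω | ∀ j : ℕ, X₂ ω ≠ 2^(j+1)} from
        Set.ext fun ω => by simp]
      exact dyadic_compl X₂ hX₂ hpmf₂
  have t1 : ∀ n : ℕ, ((2:ℝ≥0∞)^n)⁻¹.toReal = ((2:ℝ)^n)⁻¹ := by
    intro n
    rw [ENNReal.toReal_inv]
    norm_num
  have tle : ∀ i j : ℕ, i ≤ j → ((2:ℝ≥0∞)^j)⁻¹ ≤ ((2:ℝ≥0∞)^i)⁻¹ := fun i j hij =>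
    ENNReal.inv_le_inv.mpr (pow_le_pow_right' one_le_two hij)
  have t1e : ∀ n : ℕ, ((2:ℝ≥0∞)^n)⁻¹ ≤ 1 := fun n => by
    simpa using tle 0 n (Nat.zero_le n)
  have hne : ∀ n : ℕ, ((2:ℝ≥0∞)^n)⁻¹ ≠ ⊤ := fun n => by
    simp
  constructor
  · intro k ℓ hk hkl
    obtain ⟨m, rfl⟩ : ∃ m, ℓ = m + 1 := ⟨ℓ-1, by omega⟩
    set A₁ := X₁ ⁻¹' Set.Ioi ((2:ℝ)^(m+1)) with hA₁
    set A₂ := X₁ ⁻¹' Set.Iic ((2:ℝ)^(m+1)) ∩ X₂ ⁻¹' Set.Ioi ((2:ℝ)^(m+1)) with hA₂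
    set A₃ := X₁ ⁻¹' {(2:ℝ)^(m+1)} ∩ X₂ ⁻¹' Set.Ioc ((2:ℝ)^k) ((2:ℝ)^(m+1)) with hA₃
    set A₄ := X₁ ⁻¹' Set.Ioo ((2:ℝ)^k) ((2:ℝ)^(m+1)) ∩ X₂ ⁻¹' {(2:ℝ)^(m+1)} with hA₄
    have key : ℙ {ω | X₁ ω + X₂ ω > 2^k + 2^(m+1)} = ℙ (A₁ ∪ (A₂ ∪ (A₃ ∪ A₄))) := by
      rw [← measure_inter_conull (s := {ω | X₁ ω + X₂ ω > 2^k + 2^(m+1)}) hDc,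
        ← measure_inter_conull (s := A₁ ∪ (A₂ ∪ (A₃ ∪ A₄))) hDc]
      congr 1
      ext ω
      simp only [Set.mem_inter_iff, Set.mem_setOf_eq, Set.mem_union, Set.mem_preimage,
        Set.mem_Ioi, Set.mem_Iic, Set.mem_Ioc, Set.mem_Ioo, Set.mem_singleton_iff,
        hA₁, hA₂, hA₃, hA₄, gt_iff_lt]
      constructor
      · rintro ⟨hsum, ⟨a, ha⟩, ⟨b, hb⟩⟩
        refine ⟨?_, ⟨a, ha⟩, ⟨b, hb⟩⟩
        by_cases h1 : m + 1 < a + 1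
        · refine Or.inl ?_
          rw [ha]
          exact (hlt' (m+1) (a+1)).mpr h1
        · have ha1 : X₁ ω ≤ 2^(m+1) := by rw [ha]; exact (hle' (a+1) (m+1)).mpr (by omega)
          by_cases h2 : m + 1 < b + 1
          · refine Or.inr (Or.inl ⟨ha1, ?_⟩)
            rw [hb]
            exact (hlt' (m+1) (b+1)).mpr h2
          · have hb1 : X₂ ω ≤ 2^(m+1) := by rw [hb]; exact (hle' (b+1) (m+1)).mpr (by omega)
            by_cases h3 : a + 1 = m + 1
            · have hX1eq : X₁ ω = 2^(m+1) := by rw [ha, h3]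
              exact Or.inr (Or.inr (Or.inl ⟨hX1eq, by linarith, hb1⟩))
            · have ha2 : X₁ ω ≤ 2^m := by rw [ha]; exact (hle' (a+1) m).mpr (by omega)
              have hb2 : b + 1 = m + 1 := by
                by_contra hb3
                have hb4 : X₂ ω ≤ 2^m := by rw [hb]; exact (hle' (b+1) m).mpr (by omega)
                have h2m : (2:ℝ)^m + 2^m = 2^(m+1) := by rw [pow_succ]; ring
                linarith [hp k]
              have hX2eq : X₂ ω = 2^(m+1) := by rw [hb, hb2]
              have hX1lt : X₁ ω < 2^(m+1) := by rw [ha]; exact (hlt' (a+1) (m+1)).mpr (by omega)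
              exact Or.inr (Or.inr (Or.inr ⟨⟨by linarith, hX1lt⟩, hX2eq⟩))
      · rintro ⟨hmem, ⟨a, ha⟩, ⟨b, hb⟩⟩
        refine ⟨?_, ⟨a, ha⟩, ⟨b, hb⟩⟩
        have hX₁pos : (0:ℝ) < X₁ ω := by rw [ha]; exact hp (a+1)
        have hX₂pos : (0:ℝ) < X₂ ω := by rw [hb]; exact hp (b+1)
        have hkℓ : (2:ℝ)^k < 2^(m+1) := (hlt' k (m+1)).mpr (by omega)
        have h2m : (2:ℝ)^(m+2) = 2^(m+1) + 2^(m+1) := by rw [pow_succ]; ring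
        rcases hmem with h | h | h | h
        · have h1 : m + 1 < a + 1 := by
            have := h; rw [ha] at this
            exact (hlt' (m+1) (a+1)).mp this
          have hX1 : (2:ℝ)^(m+2) ≤ X₁ ω := by rw [ha]; exact (hle' (m+2) (a+1)).mpr (by omega)
          linarith
        · have h1 : m + 1 < b + 1 := by
            have := h.2; rw [hb] at this
            exact (hlt' (m+1) (b+1)).mp this
          have hX2 : (2:ℝ)^(m+2) ≤ X₂ ω := by rw [hb]; exact (hle' (m+2) (b+1)).mpr (by omega)
          linarith
        · obtain ⟨h1, h2, _⟩ := h
          linarith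
        · obtain ⟨⟨h1, _⟩, h2⟩ := h
          linarith
    have mA₂ : MeasurableSet A₂ := (hX₁ measurableSet_Iic).inter (hX₂ measurableSet_Ioi)
    have mA₃ : MeasurableSet A₃ :=
      (hX₁ (measurableSet_singleton _)).inter (hX₂ measurableSet_Ioc)
    have mA₄ : MeasurableSet A₄ :=
      (hX₁ measurableSet_Ioo).inter (hX₂ (measurableSet_singleton _))
    have hdis3 : Disjoint A₃ A₄ := by
      refine Set.disjoint_left.mpr fun ω h3 h4 => ?_
      simp only [hA₃, hA₄, Set.mem_inter_iff, Set.mem_preimage, Set.mem_singleton_iff,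
        Set.mem_Ioc, Set.mem_Ioo] at h3 h4
      linarith [h3.1, h4.1.2]
    have hdis2 : Disjoint A₂ (A₃ ∪ A₄) := by
      refine Set.disjoint_left.mpr fun ω h2 h34 => ?_
      simp only [hA₂, hA₃, hA₄, Set.mem_inter_iff, Set.mem_preimage, Set.mem_singleton_iff,
        Set.mem_Ioc, Set.mem_Ioo, Set.mem_Iic, Set.mem_Ioi, Set.mem_union] at h2 h34
      rcases h34 with h | h
      · linarith [h2.2, h.2.2]
      · linarith [h2.2, h.2.le]
    have hdis1 : Disjoint A₁ (A₂ ∪ (A₃ ∪ A₄)) := by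
      refine Set.disjoint_left.mpr fun ω h1 h234 => ?_
      simp only [hA₁, hA₂, hA₃, hA₄, Set.mem_inter_iff, Set.mem_preimage,
        Set.mem_singleton_iff, Set.mem_Ioc, Set.mem_Ioo, Set.mem_Iic, Set.mem_Ioi,
        Set.mem_union] at h1 h234
      rcases h234 with h | h | h
      · linarith [h.1]
      · linarith [h.1.le]
      · linarith [h.1.2]
    rw [key, measure_union hdis1 (mA₂.union (mA₃.union mA₄)),
      measure_union hdis2 (mA₃.union mA₄), measure_union hdis3 mA₄]
    have e1 : ℙ A₁ = ((2:ℝ≥0∞)^(m+1))⁻¹ := by rw [hA₁, meas_Ioi X₁ hX₁ hpmf₁]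
    have e2 : ℙ A₂ = (1 - ((2:ℝ≥0∞)^(m+1))⁻¹) * ((2:ℝ≥0∞)^(m+1))⁻¹ := by
      rw [hA₂, hind.measure_inter_preimage_eq_mul _ _ measurableSet_Iic measurableSet_Ioi,
        meas_Iic X₁ hX₁ hpmf₁, meas_Ioi X₂ hX₂ hpmf₂]
    have e3 : ℙ A₃ = ((2:ℝ≥0∞)^(m+1))⁻¹ * (((2:ℝ≥0∞)^k)⁻¹ - ((2:ℝ≥0∞)^(m+1))⁻¹) := by
      rw [hA₃, hind.measure_inter_preimage_eq_mul _ _ (measurableSet_singleton _) measurableSet_Ioc,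
        meas_single X₁ hX₁ hpmf₁ (m+1) (by omega), meas_Ioc X₂ hX₂ hpmf₂ k (m+1) (by omega)]
    have e4 : ℙ A₄ = (((2:ℝ≥0∞)^k)⁻¹ - ((2:ℝ≥0∞)^m)⁻¹) * ((2:ℝ≥0∞)^(m+1))⁻¹ := by
      rw [hA₄, hind.measure_inter_preimage_eq_mul _ _ measurableSet_Ioo (measurableSet_singleton _),
        meas_Ioo X₁ hX₁ hpmf₁ k m (by omega), meas_single X₂ hX₂ hpmf₂ (m+1) (by omega)]
    rw [e1, e2, e3, e4]
    rw [ENNReal.toReal_add (hne _) ?h1, ENNReal.toReal_add ?h2 ?h3, ENNReal.toReal_add ?h4 ?h5,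
      ENNReal.toReal_mul, ENNReal.toReal_mul, ENNReal.toReal_mul,
      ENNReal.toReal_sub_of_le (t1e _) ENNReal.one_ne_top,
      ENNReal.toReal_sub_of_le (tle k (m+1) (by omega)) (hne _),
      ENNReal.toReal_sub_of_le (tle k m (by omega)) (hne _),
      t1, t1, t1, ENNReal.toReal_one]
    case h2 => exact ENNReal.mul_ne_top (by simp [ENNReal.sub_ne_top]) (hne _)
    case h4 => exact ENNReal.mul_ne_top (hne _) (by simp [ENNReal.sub_ne_top])
    case h5 => exact ENNReal.mul_ne_top (by simp [ENNReal.sub_ne_top]) (hne _)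
    case h3 =>
      refine ENNReal.add_ne_top.mpr ⟨?_, ?_⟩
      · exact ENNReal.mul_ne_top (hne _) (by simp [ENNReal.sub_ne_top])
      · exact ENNReal.mul_ne_top (by simp [ENNReal.sub_ne_top]) (hne _)
    case h1 =>
      refine ENNReal.add_ne_top.mpr ⟨ENNReal.mul_ne_top (by simp [ENNReal.sub_ne_top]) (hne _),
        ENNReal.add_ne_top.mpr ⟨ENNReal.mul_ne_top (hne _) (by simp [ENNReal.sub_ne_top]),
          ENNReal.mul_ne_top (by simp [ENNReal.sub_ne_top]) (hne _)⟩⟩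
    have hpden : ∀ n : ℕ, ((2:ℝ)^n) ≠ 0 := fun n => (hp n).ne'
    rw [show (2:ℝ)^(m+1+k) = 2^(m+1) * 2^k from pow_add 2 (m+1) k,
      show (2:ℝ)^(2*(m+1)) = 2^(m+1) * 2^(m+1) from by rw [two_mul, pow_add],
      show (2:ℝ)^(m+1) = 2^m * 2 from pow_succ 2 m]
    field_simp
    ring
  · intro ℓ hℓ
    obtain ⟨m, rfl⟩ : ∃ m, ℓ = m + 1 := ⟨ℓ-1, by omega⟩
    set A₁ := X₁ ⁻¹' Set.Ioi ((2:ℝ)^(m+1)) with hA₁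
    set A₂ := X₁ ⁻¹' Set.Iic ((2:ℝ)^(m+1)) ∩ X₂ ⁻¹' Set.Ioi ((2:ℝ)^(m+1)) with hA₂
    have key : ℙ {ω | X₁ ω + X₂ ω > 2^(m+1) + 2^(m+1)} = ℙ (A₁ ∪ A₂) := by
      rw [← measure_inter_conull (s := {ω | X₁ ω + X₂ ω > 2^(m+1) + 2^(m+1)}) hDc,
        ← measure_inter_conull (s := A₁ ∪ A₂) hDc]
      congr 1
      ext ω
      simp only [Set.mem_inter_iff, Set.mem_setOf_eq, Set.mem_union, Set.mem_preimage,
        Set.mem_Ioi, Set.mem_Iic, hA₁, hA₂, gt_iff_lt]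
      constructor
      · rintro ⟨hsum, ⟨a, ha⟩, ⟨b, hb⟩⟩
        refine ⟨?_, ⟨a, ha⟩, ⟨b, hb⟩⟩
        by_cases h1 : m + 1 < a + 1
        · refine Or.inl ?_
          rw [ha]
          exact (hlt' (m+1) (a+1)).mpr h1
        · have ha1 : X₁ ω ≤ 2^(m+1) := by rw [ha]; exact (hle' (a+1) (m+1)).mpr (by omega)
          refine Or.inr ⟨ha1, ?_⟩
          by_contra h2
          push_neg at h2
          linarith
      · rintro ⟨hmem, ⟨a, ha⟩, ⟨b, hb⟩⟩
        refine ⟨?_, ⟨a, ha⟩, ⟨b, hb⟩⟩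
        have hX₁pos : (0:ℝ) < X₁ ω := by rw [ha]; exact hp (a+1)
        have hX₂pos : (0:ℝ) < X₂ ω := by rw [hb]; exact hp (b+1)
        have h2m : (2:ℝ)^(m+2) = 2^(m+1) + 2^(m+1) := by rw [pow_succ]; ring
        rcases hmem with h | h
        · have h1 : m + 1 < a + 1 := by
            have := h; rw [ha] at this
            exact (hlt' (m+1) (a+1)).mp this
          have hX1 : (2:ℝ)^(m+2) ≤ X₁ ω := by rw [ha]; exact (hle' (m+2) (a+1)).mpr (by omega)
          linarith
        · have h1 : m + 1 < b + 1 := by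
            have := h.2; rw [hb] at this
            exact (hlt' (m+1) (b+1)).mp this
          have hX2 : (2:ℝ)^(m+2) ≤ X₂ ω := by rw [hb]; exact (hle' (m+2) (b+1)).mpr (by omega)
          linarith
    have mA₂ : MeasurableSet A₂ := (hX₁ measurableSet_Iic).inter (hX₂ measurableSet_Ioi)
    have hdis : Disjoint A₁ A₂ := by
      refine Set.disjoint_left.mpr fun ω h1 h2 => ?_
      simp only [hA₁, hA₂, Set.mem_inter_iff, Set.mem_preimage, Set.mem_Iic,
        Set.mem_Ioi] at h1 h2
      linarith [h2.1]
    rw [key, measure_union hdis mA₂]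
    have e1 : ℙ A₁ = ((2:ℝ≥0∞)^(m+1))⁻¹ := by rw [hA₁, meas_Ioi X₁ hX₁ hpmf₁]
    have e2 : ℙ A₂ = (1 - ((2:ℝ≥0∞)^(m+1))⁻¹) * ((2:ℝ≥0∞)^(m+1))⁻¹ := by
      rw [hA₂, hind.measure_inter_preimage_eq_mul _ _ measurableSet_Iic measurableSet_Ioi,
        meas_Iic X₁ hX₁ hpmf₁, meas_Ioi X₂ hX₂ hpmf₂]
    rw [e1, e2]
    rw [ENNReal.toReal_add (hne _) (ENNReal.mul_ne_top (by simp [ENNReal.sub_ne_top]) (hne _)),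
      ENNReal.toReal_mul, ENNReal.toReal_sub_of_le (t1e _) ENNReal.one_ne_top,
      t1, ENNReal.toReal_one]
    have hpden : ∀ n : ℕ, ((2:ℝ)^n) ≠ 0 := fun n => (hp n).ne'
    rw [show (2:ℝ)^(2*(m+1)) = 2^(m+1) * 2^(m+1) from by rw [two_mul, pow_add]]
    field_simp
    ring
end

section
/- Let X₁, X₂ be independent St. Petersburg random variables. Then the limit as ℓ → ∞ of P{X₁ + X₂ > 2^ℓ}/P{X₁ > 2^ℓ} equals 4, while the limit as ℓ → ∞ of P{X₁ + X₂ > 2^ℓ - 1}/P{X₁ > 2^ℓ - 1} equals 2. -/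
open MeasureTheory ProbabilityTheory Real Filter

namespace StPetersburgAux

variable {Ω : Type*} [MeasureSpace Ω] [IsProbabilityMeasure (ℙ : Measure Ω)]

lemma tsum_aux (m : ℕ) : ∑' k : ℕ, ((1:ENNReal)/2^(k+m)) = 2/2^m := by
  have h : ∀ k:ℕ, ((1:ENNReal)/2^(k+m)) = (2⁻¹)^k * (1/2^m) := by
    intro k
    rw [pow_add, one_div, ENNReal.mul_inv (by simp) (by simp), ← ENNReal.inv_pow, one_div]
  rw [tsum_congr h, ENNReal.tsum_mul_right, ENNReal.tsum_geometric, ENNReal.one_sub_inv_two]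
  rw [inv_inv, one_div]
  exact (div_eq_mul_inv (2:ENNReal) (2^m)).symm

lemma pow_inj (i j : ℕ) (h : (2:ℝ)^i = 2^j) : i = j :=
  pow_right_injective₀ (by norm_num : (0:ℝ) < 2) (by norm_num : (2:ℝ) ≠ 1) h

lemma toReal_div_pow (m : ℕ) : ((1:ENNReal)/2^m).toReal = (1/2:ℝ)^m := by
  rw [ENNReal.toReal_div]
  simp [ENNReal.toReal_pow, one_div, inv_pow]

lemma toReal_two_div_pow (m : ℕ) : ((2:ENNReal)/2^m).toReal = 2*(1/2:ℝ)^m := by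
  rw [ENNReal.toReal_div]
  simp [ENNReal.toReal_pow, div_eq_mul_inv, ← inv_pow, one_div]

/-- The complement of the support union is null. -/
lemma null_aux (X : Ω → ℝ) (hX : Measurable X)
    (hpmf : ∀ k : ℕ, 1 ≤ k → ℙ {ω | X ω = 2 ^ k} = 1 / 2 ^ k) :
    ℙ (⋃ k : ℕ, {ω | X ω = 2 ^ (k+1)})ᶜ = 0 := by
  have hmeas : ∀ k : ℕ, MeasurableSet {ω | X ω = (2:ℝ) ^ (k+1)} := fun k =>
    hX (measurableSet_singleton _)
  have hdisj : Pairwise (Function.onFun Disjoint (fun k : ℕ => {ω | X ω = (2:ℝ) ^ (k+1)})) := by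
    intro i j hij
    simp only [Function.onFun, Set.disjoint_left]
    intro ω hi hj
    exact hij (by have := pow_inj (i+1) (j+1) (by rw [← hi, hj]); omega)
  have hU : ℙ (⋃ k : ℕ, {ω | X ω = (2:ℝ) ^ (k+1)}) = 1 := by
    rw [measure_iUnion hdisj hmeas]
    have h2 : ∀ k : ℕ, ℙ {ω | X ω = (2:ℝ) ^ (k+1)} = 1 / 2^(k+1) := fun k =>
      hpmf (k+1) (by omega)
    calc ∑' k:ℕ, ℙ {ω | X ω = (2:ℝ)^(k+1)} = ∑' k:ℕ, ((1:ENNReal)/2^(k+1)) := tsum_congr h2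
    _ = 2/2^1 := tsum_aux 1
    _ = 1 := by rw [pow_one, ENNReal.div_self] <;> norm_num
  rw [measure_compl (MeasurableSet.iUnion hmeas) (by simp), hU]
  simp

lemma meas_eq_aux {A B N : Set Ω} (hN : ℙ N = 0) (h1 : A ⊆ B ∪ N) (h2 : B ⊆ A ∪ N) :
    ℙ A = ℙ B := by
  apply le_antisymm
  · calc ℙ A ≤ ℙ (B ∪ N) := measure_mono h1
      _ ≤ ℙ B + ℙ N := measure_union_le _ _
      _ = ℙ B := by rw [hN, add_zero]
  · calc ℙ B ≤ ℙ (A ∪ N) := measure_mono h2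
      _ ≤ ℙ A + ℙ N := measure_union_le _ _
      _ = ℙ A := by rw [hN, add_zero]

/-- tail probability: P(X ≥ 2^m) = 2/2^m. -/
lemma tail_aux (X : Ω → ℝ) (hX : Measurable X)
    (hpmf : ∀ k : ℕ, 1 ≤ k → ℙ {ω | X ω = 2 ^ k} = 1 / 2 ^ k) (m : ℕ) (hm : 1 ≤ m) :
    ℙ {ω | (2:ℝ)^m ≤ X ω} = 2/2^m := by
  have hnull := null_aux X hX hpmf
  have key : ℙ {ω | (2:ℝ)^m ≤ X ω} = ℙ (⋃ j : ℕ, {ω | X ω = (2:ℝ) ^ (j + m)}) := by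
    apply meas_eq_aux hnull
    · intro ω hω
      by_cases hU : ω ∈ ⋃ k : ℕ, {ω | X ω = (2:ℝ) ^ (k+1)}
      · left
        obtain ⟨_, ⟨k, rfl⟩, hk⟩ := hU
        simp only [Set.mem_setOf_eq] at hk hω
        have hle : m ≤ k + 1 := by
          by_contra hc
          push_neg at hc
          exact absurd (hω.trans_eq hk) (not_le.mpr (pow_lt_pow_right₀ one_lt_two hc))
        refine Set.mem_iUnion.mpr ⟨k + 1 - m, ?_⟩
        simp only [Set.mem_setOf_eq]
        rw [hk]; congr 1; omega
      · exact Or.inr hU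
    · intro ω hω
      obtain ⟨_, ⟨j, rfl⟩, hj⟩ := hω
      simp only [Set.mem_setOf_eq] at hj
      left
      simp only [Set.mem_setOf_eq, hj]
      exact pow_le_pow_right₀ one_le_two (by omega)
  rw [key]
  have hmeas : ∀ j : ℕ, MeasurableSet {ω | X ω = (2:ℝ) ^ (j+m)} := fun j =>
    hX (measurableSet_singleton _)
  have hdisj : Pairwise (Function.onFun Disjoint (fun j : ℕ => {ω | X ω = (2:ℝ) ^ (j+m)})) := by
    intro i j hij
    simp only [Function.onFun, Set.disjoint_left]
    intro ω hi hj
    exact hij (by have := pow_inj (i+m) (j+m) (by rw [← hi, hj]); omega)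
  rw [measure_iUnion hdisj hmeas]
  have h2 : ∀ j : ℕ, ℙ {ω | X ω = (2:ℝ) ^ (j+m)} = 1 / 2^(j+m) := fun j =>
    hpmf (j+m) (by omega)
  rw [tsum_congr h2, tsum_aux m]

end StPetersburgAux

open StPetersburgAux in
theorem stmt_3 {Ω : Type*} [MeasureSpace Ω] [IsProbabilityMeasure (ℙ : Measure Ω)]
    (X₁ X₂ : Ω → ℝ) (hX₁ : Measurable X₁) (hX₂ : Measurable X₂)
    (hind : IndepFun X₁ X₂ ℙ)
    (hpmf₁ : ∀ k : ℕ, 1 ≤ k → ℙ {ω | X₁ ω = 2 ^ k} = 1 / 2 ^ k)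
    (hpmf₂ : ∀ k : ℕ, 1 ≤ k → ℙ {ω | X₂ ω = 2 ^ k} = 1 / 2 ^ k) :
    Tendsto (fun ℓ : ℕ =>
        (ℙ {ω | X₁ ω + X₂ ω > 2 ^ ℓ}).toReal / (ℙ {ω | X₁ ω > 2 ^ ℓ}).toReal)
      atTop (nhds 4) ∧
    Tendsto (fun ℓ : ℕ =>
        (ℙ {ω | X₁ ω + X₂ ω > 2 ^ ℓ - 1}).toReal / (ℙ {ω | X₁ ω > (2 : ℝ) ^ ℓ - 1}).toReal)
      atTop (nhds 2) := by
  -- notation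
  set U₁ : Set Ω := ⋃ k : ℕ, {ω | X₁ ω = (2:ℝ) ^ (k+1)} with hU₁def
  set U₂ : Set Ω := ⋃ k : ℕ, {ω | X₂ ω = (2:ℝ) ^ (k+1)} with hU₂def
  have hN₁ : ℙ U₁ᶜ = 0 := null_aux X₁ hX₁ hpmf₁
  have hN₂ : ℙ U₂ᶜ = 0 := null_aux X₂ hX₂ hpmf₂
  have hNN : ℙ (U₁ᶜ ∪ U₂ᶜ) = 0 := measure_union_null hN₁ hN₂
  -- B sets
  have hB₁meas : ∀ m : ℕ, MeasurableSet {ω | (2:ℝ)^m ≤ X₁ ω} := fun m =>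
    hX₁ measurableSet_Ici
  have hB₂meas : ∀ m : ℕ, MeasurableSet {ω | (2:ℝ)^m ≤ X₂ ω} := fun m =>
    hX₂ measurableSet_Ici
  have htail₁ : ∀ m : ℕ, 1 ≤ m → ℙ {ω | (2:ℝ)^m ≤ X₁ ω} = 2/2^m :=
    tail_aux X₁ hX₁ hpmf₁
  have htail₂ : ∀ m : ℕ, 1 ≤ m → ℙ {ω | (2:ℝ)^m ≤ X₂ ω} = 2/2^m :=
    tail_aux X₂ hX₂ hpmf₂
  -- independence of tail events
  have hindep : ∀ m : ℕ, ℙ ({ω | (2:ℝ)^m ≤ X₁ ω} ∩ {ω | (2:ℝ)^m ≤ X₂ ω})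
      = ℙ {ω | (2:ℝ)^m ≤ X₁ ω} * ℙ {ω | (2:ℝ)^m ≤ X₂ ω} := fun m =>
    hind.measure_inter_preimage_eq_mul (Set.Ici ((2:ℝ)^m)) (Set.Ici ((2:ℝ)^m))
      measurableSet_Ici measurableSet_Ici
  -- measure of the union of the two tail events, in toReal form
  have hBunion : ∀ m : ℕ, 1 ≤ m →
      (ℙ ({ω | (2:ℝ)^m ≤ X₁ ω} ∪ {ω | (2:ℝ)^m ≤ X₂ ω})).toReal
        = 2*(2*(1/2:ℝ)^m) - (2*(1/2:ℝ)^m)^2 := by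
    intro m hm
    have key := measure_union_add_inter (μ := (ℙ : Measure Ω))
      {ω | (2:ℝ)^m ≤ X₁ ω} (hB₂meas m)
    have hq : ((2:ENNReal)/2^m).toReal = 2*(1/2:ℝ)^m := toReal_two_div_pow m
    have hI : ℙ ({ω | (2:ℝ)^m ≤ X₁ ω} ∩ {ω | (2:ℝ)^m ≤ X₂ ω})
        = (2/2^m) * (2/2^m) := by
      rw [hindep m, htail₁ m hm, htail₂ m hm]
    rw [htail₁ m hm, htail₂ m hm, hI] at key
    have hfin : ℙ ({ω | (2:ℝ)^m ≤ X₁ ω} ∪ {ω | (2:ℝ)^m ≤ X₂ ω}) ≠ ⊤ := measure_ne_top _ _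
    have hq_ne : ((2:ENNReal)/2^m) ≠ ⊤ :=
      (ENNReal.div_lt_top (by norm_num) (by positivity)).ne
    have hfin2 : ((2:ENNReal)/2^m) * (2/2^m) ≠ ⊤ := ENNReal.mul_ne_top hq_ne hq_ne
    have := congrArg ENNReal.toReal key
    rw [ENNReal.toReal_add hfin hfin2, ENNReal.toReal_add hq_ne hq_ne,
      ENNReal.toReal_mul, hq] at this
    nlinarith [this]
  -- First limit --------------------------------------------------------------
  have hnum1 : ∀ ℓ : ℕ, 1 ≤ ℓ →
      ℙ {ω | X₁ ω + X₂ ω > (2:ℝ) ^ ℓ}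
        = ℙ ({ω | (2:ℝ)^ℓ ≤ X₁ ω} ∪ {ω | (2:ℝ)^ℓ ≤ X₂ ω}) := by
    intro ℓ hℓ
    apply meas_eq_aux hNN
    · -- sum > 2^ℓ ⊆ B₁ ∪ B₂ ∪ N
      intro ω hω
      by_cases h1 : ω ∈ U₁
      · by_cases h2 : ω ∈ U₂
        · left
          obtain ⟨_, ⟨j, rfl⟩, hj⟩ := h1
          obtain ⟨_, ⟨k, rfl⟩, hk⟩ := h2
          simp only [Set.mem_setOf_eq] at hj hk hω
          simp only [Set.mem_union, Set.mem_setOf_eq]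
          by_contra hc
          push_neg at hc
          obtain ⟨hc1, hc2⟩ := hc
          rw [hj] at hc1; rw [hk] at hc2
          have ha : j + 1 ≤ ℓ - 1 := by
            have := (pow_lt_pow_iff_right₀ (one_lt_two (α := ℝ))).mp hc1; omega
          have hb : k + 1 ≤ ℓ - 1 := by
            have := (pow_lt_pow_iff_right₀ (one_lt_two (α := ℝ))).mp hc2; omega
          have h3 : X₁ ω + X₂ ω ≤ (2:ℝ)^(ℓ-1) + 2^(ℓ-1) := by
            rw [hj, hk]
            exact add_le_add (pow_le_pow_right₀ one_le_two ha)
              (pow_le_pow_right₀ one_le_two hb)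
          have h4 : (2:ℝ)^(ℓ-1) + 2^(ℓ-1) = 2^ℓ := by
            rw [← two_mul, ← pow_succ']
            congr 1; omega
          linarith [hω]
        · exact Or.inr (Or.inr h2)
      · exact Or.inr (Or.inl h1)
    · -- B₁ ∪ B₂ ⊆ {sum > 2^ℓ} ∪ N
      intro ω hω
      rcases hω with h | h
      · by_cases h2 : ω ∈ U₂
        · left
          obtain ⟨_, ⟨k, rfl⟩, hk⟩ := h2
          simp only [Set.mem_setOf_eq] at h hk ⊢
          have : (0:ℝ) < X₂ ω := by rw [hk]; positivity
          linarith
        · exact Or.inr (Or.inr h2)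
      · by_cases h1 : ω ∈ U₁
        · left
          obtain ⟨_, ⟨k, rfl⟩, hk⟩ := h1
          simp only [Set.mem_setOf_eq] at h hk ⊢
          have : (0:ℝ) < X₁ ω := by rw [hk]; positivity
          linarith
        · exact Or.inr (Or.inl h1)
  have hden1 : ∀ ℓ : ℕ, ℙ {ω | X₁ ω > (2:ℝ) ^ ℓ} = ℙ {ω | (2:ℝ)^(ℓ+1) ≤ X₁ ω} := by
    intro ℓ
    apply meas_eq_aux (A := {ω | X₁ ω > (2:ℝ) ^ ℓ}) hN₁
    · intro ω hω
      by_cases h1 : ω ∈ U₁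
      · left
        obtain ⟨_, ⟨k, rfl⟩, hk⟩ := h1
        simp only [Set.mem_setOf_eq] at hω hk ⊢
        rw [hk] at hω ⊢
        exact pow_le_pow_right₀ one_le_two
          ((pow_lt_pow_iff_right₀ (one_lt_two (α := ℝ))).mp hω)
      · exact Or.inr h1
    · intro ω hω
      left
      simp only [Set.mem_setOf_eq] at hω ⊢
      exact lt_of_lt_of_le (pow_lt_pow_right₀ one_lt_two (by omega)) hω
  have part1 : Tendsto (fun ℓ : ℕ =>
      (ℙ {ω | X₁ ω + X₂ ω > 2 ^ ℓ}).toReal / (ℙ {ω | X₁ ω > 2 ^ ℓ}).toReal)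
      atTop (nhds 4) := by
    have heq : ∀ᶠ ℓ : ℕ in atTop,
        (4:ℝ) - 4*(1/2:ℝ)^ℓ
          = (ℙ {ω | X₁ ω + X₂ ω > 2 ^ ℓ}).toReal / (ℙ {ω | X₁ ω > 2 ^ ℓ}).toReal := by
      filter_upwards [eventually_ge_atTop 1] with ℓ hℓ
      set r : ℝ := (1/2:ℝ)^ℓ with hrdef
      have hr0 : 0 < r := by positivity
      have hnum : (ℙ {ω | X₁ ω + X₂ ω > (2:ℝ) ^ ℓ}).toReal = 2*(2*r) - (2*r)^2 := by
        rw [hnum1 ℓ hℓ]; exact hBunion ℓ hℓ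
      have hden : (ℙ {ω | X₁ ω > (2:ℝ) ^ ℓ}).toReal = r := by
        rw [hden1 ℓ, htail₁ (ℓ+1) (by omega), toReal_two_div_pow, hrdef, pow_succ]
        ring
      rw [hnum, hden]
      field_simp
      ring
    refine Tendsto.congr' heq ?_
    have h0 : Tendsto (fun ℓ : ℕ => (1/2:ℝ)^ℓ) atTop (nhds 0) :=
      tendsto_pow_atTop_nhds_zero_of_lt_one (by norm_num) (by norm_num)
    have := Tendsto.sub (tendsto_const_nhds (x := (4:ℝ)) (f := atTop))
      (Tendsto.const_mul 4 h0)
    simpa using this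
  -- Second limit -------------------------------------------------------------
  have hden2 : ∀ ℓ : ℕ, 1 ≤ ℓ →
      ℙ {ω | X₁ ω > (2:ℝ) ^ ℓ - 1} = ℙ {ω | (2:ℝ)^ℓ ≤ X₁ ω} := by
    intro ℓ hℓ
    apply meas_eq_aux (A := {ω | X₁ ω > (2:ℝ) ^ ℓ - 1}) hN₁
    · intro ω hω
      by_cases h1 : ω ∈ U₁
      · left
        obtain ⟨_, ⟨k, rfl⟩, hk⟩ := h1
        simp only [Set.mem_setOf_eq] at hω hk ⊢
        rw [hk] at hω ⊢
        have hnat : (2:ℕ)^ℓ ≤ 2^(k+1) := by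
          have : ((2^ℓ : ℕ):ℝ) < ((2^(k+1) : ℕ):ℝ) + 1 := by push_cast; linarith
          exact Nat.lt_succ_iff.mp (by exact_mod_cast this)
        calc (2:ℝ)^ℓ = ((2^ℓ : ℕ):ℝ) := by push_cast; ring
          _ ≤ ((2^(k+1) : ℕ):ℝ) := by exact_mod_cast hnat
          _ = (2:ℝ)^(k+1) := by push_cast; ring
      · exact Or.inr h1
    · intro ω hω
      left
      simp only [Set.mem_setOf_eq] at hω ⊢
      linarith
  have hnum2 : ∀ ℓ : ℕ, 2 ≤ ℓ →
      ℙ {ω | X₁ ω + X₂ ω > (2:ℝ) ^ ℓ - 1}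
        = ℙ ({ω | (2:ℝ)^ℓ ≤ X₁ ω} ∪ {ω | (2:ℝ)^ℓ ≤ X₂ ω})
          + ℙ ({ω | X₁ ω = (2:ℝ)^(ℓ-1)} ∩ {ω | X₂ ω = (2:ℝ)^(ℓ-1)}) := by
    intro ℓ hℓ
    have hstep : ℙ {ω | X₁ ω + X₂ ω > (2:ℝ) ^ ℓ - 1}
        = ℙ (({ω | (2:ℝ)^ℓ ≤ X₁ ω} ∪ {ω | (2:ℝ)^ℓ ≤ X₂ ω})
            ∪ ({ω | X₁ ω = (2:ℝ)^(ℓ-1)} ∩ {ω | X₂ ω = (2:ℝ)^(ℓ-1)})) := by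
      apply meas_eq_aux hNN
      · intro ω hω
        by_cases h1 : ω ∈ U₁
        · by_cases h2 : ω ∈ U₂
          · left
            obtain ⟨_, ⟨j, rfl⟩, hj⟩ := h1
            obtain ⟨_, ⟨k, rfl⟩, hk⟩ := h2
            simp only [Set.mem_setOf_eq] at hj hk hω
            have hnat : (2:ℕ)^ℓ ≤ 2^(j+1) + 2^(k+1) := by
              have : ((2^ℓ : ℕ):ℝ) < ((2^(j+1) + 2^(k+1) : ℕ):ℝ) + 1 := by
                push_cast; rw [hj, hk] at hω; linarith
              exact Nat.lt_succ_iff.mp (by exact_mod_cast this)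
            -- nat case analysis
            have hcases : ℓ ≤ j + 1 ∨ ℓ ≤ k + 1 ∨ (j + 1 = ℓ - 1 ∧ k + 1 = ℓ - 1) := by
              by_cases hA : ℓ ≤ j + 1
              · exact Or.inl hA
              by_cases hB : ℓ ≤ k + 1
              · exact Or.inr (Or.inl hB)
              push_neg at hA hB
              have h1 : (2:ℕ)^(j+1) ≤ 2^(ℓ-1) := Nat.pow_le_pow_right (by norm_num) (by omega)
              have h2 : (2:ℕ)^(k+1) ≤ 2^(ℓ-1) := Nat.pow_le_pow_right (by norm_num) (by omega)
              have he : (2:ℕ)^(ℓ-1) * 2 = 2^ℓ := by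
                rw [← pow_succ]; congr 1; omega
              have hj3 : (2:ℕ)^(j+1) = 2^(ℓ-1) := by omega
              have hk3 : (2:ℕ)^(k+1) = 2^(ℓ-1) := by omega
              exact Or.inr (Or.inr ⟨Nat.pow_right_injective (le_refl 2) hj3,
                Nat.pow_right_injective (le_refl 2) hk3⟩)
            rcases hcases with h | h | ⟨ha, hb⟩
            · exact Or.inl (Or.inl (by
                simp only [Set.mem_setOf_eq]
                rw [hj]; exact pow_le_pow_right₀ one_le_two h))
            · exact Or.inl (Or.inr (by
                simp only [Set.mem_setOf_eq]
                rw [hk]; exact pow_le_pow_right₀ one_le_two h))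
            · exact Or.inr ⟨by simp only [Set.mem_setOf_eq]; rw [hj, ha],
                by simp only [Set.mem_setOf_eq]; rw [hk, hb]⟩
          · exact Or.inr (Or.inr h2)
        · exact Or.inr (Or.inl h1)
      · intro ω hω
        rcases hω with (h | h) | h
        · by_cases h2 : ω ∈ U₂
          · left
            obtain ⟨_, ⟨k, rfl⟩, hk⟩ := h2
            simp only [Set.mem_setOf_eq] at h hk ⊢
            have : (0:ℝ) < X₂ ω := by rw [hk]; positivity
            linarith
          · exact Or.inr (Or.inr h2)
        · by_cases h1 : ω ∈ U₁
          · left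
            obtain ⟨_, ⟨k, rfl⟩, hk⟩ := h1
            simp only [Set.mem_setOf_eq] at h hk ⊢
            have : (0:ℝ) < X₁ ω := by rw [hk]; positivity
            linarith
          · exact Or.inr (Or.inl h1)
        · left
          obtain ⟨h1, h2⟩ := h
          simp only [Set.mem_setOf_eq] at h1 h2 ⊢
          rw [h1, h2, ← two_mul, ← pow_succ']
          have : ℓ - 1 + 1 = ℓ := by omega
          rw [this]
          linarith [pow_pos (by norm_num : (0:ℝ) < 2) ℓ]
    rw [hstep]
    apply measure_union
    · -- disjointness
      rw [Set.disjoint_left]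
      rintro ω (h | h) ⟨h1, h2⟩
      · simp only [Set.mem_setOf_eq] at h h1
        rw [h1] at h
        exact absurd ((pow_le_pow_iff_right₀ (one_lt_two (α := ℝ))).mp h) (by omega)
      · simp only [Set.mem_setOf_eq] at h h2
        rw [h2] at h
        exact absurd ((pow_le_pow_iff_right₀ (one_lt_two (α := ℝ))).mp h) (by omega)
    · exact (hX₁ (measurableSet_singleton _)).inter (hX₂ (measurableSet_singleton _))
  have part2 : Tendsto (fun ℓ : ℕ =>
      (ℙ {ω | X₁ ω + X₂ ω > 2 ^ ℓ - 1}).toReal / (ℙ {ω | X₁ ω > (2 : ℝ) ^ ℓ - 1}).toReal)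
      atTop (nhds 2) := by
    have heq : ∀ᶠ ℓ : ℕ in atTop,
        (2:ℝ) = (ℙ {ω | X₁ ω + X₂ ω > 2 ^ ℓ - 1}).toReal
          / (ℙ {ω | X₁ ω > (2 : ℝ) ^ ℓ - 1}).toReal := by
      filter_upwards [eventually_ge_atTop 2] with ℓ hℓ
      set r : ℝ := (1/2:ℝ)^ℓ with hrdef
      have hr0 : 0 < r := by positivity
      have hD : ℙ ({ω | X₁ ω = (2:ℝ)^(ℓ-1)} ∩ {ω | X₂ ω = (2:ℝ)^(ℓ-1)})
          = (1/2^(ℓ-1)) * (1/2^(ℓ-1)) := by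
        have := hind.measure_inter_preimage_eq_mul {(2:ℝ)^(ℓ-1)} {(2:ℝ)^(ℓ-1)}
          (measurableSet_singleton _) (measurableSet_singleton _)
        simp only [Set.preimage, Set.mem_singleton_iff] at this
        rw [this, hpmf₁ (ℓ-1) (by omega), hpmf₂ (ℓ-1) (by omega)]
      have hhalf : (1/2:ℝ)^(ℓ-1) = 2*r := by
        have h' : r = (1/2:ℝ)^((ℓ-1)+1) := by rw [hrdef]; congr 1; omega
        rw [h', pow_succ]; ring
      have hDreal : (ℙ ({ω | X₁ ω = (2:ℝ)^(ℓ-1)} ∩ {ω | X₂ ω = (2:ℝ)^(ℓ-1)})).toReal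
          = (2*r)^2 := by
        rw [hD, ENNReal.toReal_mul, toReal_div_pow, hhalf]
        ring
      have hnum : (ℙ {ω | X₁ ω + X₂ ω > (2:ℝ) ^ ℓ - 1}).toReal = 4*r := by
        rw [hnum2 ℓ hℓ, ENNReal.toReal_add (measure_ne_top _ _) (measure_ne_top _ _),
          hBunion ℓ (by omega), hDreal]
        ring
      have hden : (ℙ {ω | X₁ ω > (2:ℝ) ^ ℓ - 1}).toReal = 2*r := by
        rw [hden2 ℓ (by omega), htail₁ ℓ (by omega), toReal_two_div_pow]
      rw [hnum, hden]
      field_simp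
      ring
    exact Tendsto.congr' heq tendsto_const_nhds
  exact ⟨part1, part2⟩
end

section
/- Let F be the St. Petersburg distribution function. Then limsup_{x→∞} (1 - F*F(x))/(1 - F(x)) = 4 and liminf_{x→∞} (1 - F*F(x))/(1 - F(x)) = 2, where F*F denotes the distribution function of the sum of two independent copies. In particular F is O-subexponential but not subexponential. -/
open MeasureTheory ProbabilityTheory Real Filter

/-- The St. Petersburg distribution function. -/
noncomputable def stPetersburgCDF (x : ℝ) : ℝ :=
  if x < 2 then 0 else 1 - (2 : ℝ) ^ (Int.fract (logb 2 x)) / x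

lemma cdf_lt_two {x : ℝ} (hx : x < 2) : stPetersburgCDF x = 0 := by
  simp [stPetersburgCDF, hx]

lemma logb2_pow (n : ℕ) : logb 2 ((2:ℝ)^n) = n := by
  rw [Real.logb_pow, Real.logb_self_eq_one (by norm_num)]; ring

lemma cdf_eval {n : ℕ} (hn : 1 ≤ n) {x : ℝ} (h1 : (2:ℝ)^n ≤ x) (h2 : x < (2:ℝ)^(n+1)) :
    stPetersburgCDF x = 1 - ((2:ℝ)^n)⁻¹ := by
  have h2le : (2:ℝ) ≤ 2^n := by
    calc (2:ℝ) = 2^1 := (pow_one 2).symm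
    _ ≤ 2^n := pow_le_pow_right₀ one_le_two hn
  have hx2 : (2:ℝ) ≤ x := le_trans h2le h1
  have hxpos : (0:ℝ) < x := by linarith
  have hlb : (n:ℝ) ≤ logb 2 x := by
    have := Real.logb_le_logb_of_le (by norm_num : (1:ℝ) < 2) (by positivity) h1
    rwa [logb2_pow] at this
  have hub : logb 2 x < (n:ℝ) + 1 := by
    have := Real.logb_lt_logb (b := 2) (by norm_num) hxpos h2
    rwa [logb2_pow, Nat.cast_add, Nat.cast_one] at this
  have hfl : ⌊logb 2 x⌋ = (n : ℤ) := by
    rw [Int.floor_eq_iff] <;> push_cast <;> constructor <;> linarith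
  have hfr : Int.fract (logb 2 x) = logb 2 x - n := by
    rw [Int.fract, hfl]; push_cast; ring
  have hrw : (2:ℝ) ^ (logb 2 x - (n:ℝ)) = x / 2^n := by
    rw [Real.rpow_sub (by norm_num), Real.rpow_logb (by norm_num) (by norm_num) hxpos,
      Real.rpow_natCast]
  rw [stPetersburgCDF, if_neg (by linarith), hfr, hrw]
  have hne : (2:ℝ)^n ≠ 0 := by positivity
  field_simp

/-- cdf_eval valid also for `n = 0`. -/
lemma cdf_eval' (n : ℕ) {x : ℝ} (h1 : (2:ℝ)^n ≤ x) (h2 : x < (2:ℝ)^(n+1)) :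
    stPetersburgCDF x = 1 - ((2:ℝ)^n)⁻¹ := by
  rcases Nat.eq_zero_or_pos n with rfl | hn
  · rw [cdf_lt_two (by simpa using h2)]; norm_num
  · exact cdf_eval hn h1 h2

/-- Every `x ≥ 2` lies in some dyadic interval `[2^n, 2^(n+1))` with `n ≥ 1`. -/
lemma exists_dyadic {x : ℝ} (hx : 2 ≤ x) :
    ∃ n : ℕ, 1 ≤ n ∧ (2:ℝ)^n ≤ x ∧ x < (2:ℝ)^(n+1) := by
  have hxpos : (0:ℝ) < x := by linarith
  have h1 : (1:ℝ) ≤ logb 2 x := by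
    have := Real.logb_le_logb_of_le (by norm_num : (1:ℝ) < 2) (by norm_num) hx
    simpa [Real.logb_self_eq_one] using this
  set k : ℤ := ⌊logb 2 x⌋ with hk
  have hk1 : 1 ≤ k := by exact_mod_cast Int.le_floor.2 (by exact_mod_cast h1)
  have hkk : ((k.toNat : ℤ)) = k := Int.toNat_of_nonneg (by omega)
  have hcast : ((k.toNat : ℕ) : ℝ) = (k : ℝ) := by exact_mod_cast hkk
  refine ⟨k.toNat, by omega, ?_, ?_⟩
  · have : ((k.toNat : ℝ)) ≤ logb 2 x := by
      rw [hcast]; exact_mod_cast Int.floor_le _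
    calc (2:ℝ)^(k.toNat) = (2:ℝ)^((k.toNat : ℝ)) := by rw [Real.rpow_natCast]
    _ ≤ (2:ℝ)^(logb 2 x) := Real.rpow_le_rpow_of_exponent_le one_le_two this
    _ = x := Real.rpow_logb (by norm_num) (by norm_num) hxpos
  · have : logb 2 x < ((k.toNat : ℝ)) + 1 := by
      rw [hcast, hk]; exact Int.lt_floor_add_one _
    calc x = (2:ℝ)^(logb 2 x) := (Real.rpow_logb (by norm_num) (by norm_num) hxpos).symm
    _ < (2:ℝ)^(((k.toNat : ℝ)) + 1) :=
        Real.rpow_lt_rpow_of_exponent_lt (by norm_num) this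
    _ = (2:ℝ)^(k.toNat + 1) := by rw [← Real.rpow_natCast]; push_cast; ring_nf

lemma cdf_lt_one_bound {m : ℕ} {t : ℝ} (ht : t < (2:ℝ)^(m+1)) :
    stPetersburgCDF t ≤ 1 - ((2:ℝ)^m)⁻¹ := by
  rcases lt_or_ge t 2 with h | h
  · rw [cdf_lt_two h]
    have : ((2:ℝ)^m)⁻¹ ≤ 1 := by
      rw [inv_le_one_iff₀]; right; exact one_le_pow₀ one_le_two
    linarith
  · obtain ⟨j, hj1, hj2, hj3⟩ := exists_dyadic h
    have hjm : j ≤ m := by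
      by_contra hc
      push_neg at hc
      have : (2:ℝ)^(m+1) ≤ (2:ℝ)^j := pow_le_pow_right₀ one_le_two (by omega)
      linarith
    rw [cdf_eval hj1 hj2 hj3]
    have : ((2:ℝ)^m)⁻¹ ≤ ((2:ℝ)^j)⁻¹ := by
      apply inv_anti₀ (by positivity)
      exact pow_le_pow_right₀ one_le_two hjm
    linarith

section Meas

variable {Ω : Type*} [MeasureSpace Ω] [IsProbabilityMeasure (ℙ : Measure Ω)]
  {X : Ω → ℝ} (hX : Measurable X)
  (hcdf : ∀ x : ℝ, (ℙ {ω | X ω ≤ x}).toReal = stPetersburgCDF x)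

include hX hcdf

lemma meas_Ioc_toReal (a b : ℝ) (hab : a ≤ b) :
    (ℙ {ω | a < X ω ∧ X ω ≤ b}).toReal = stPetersburgCDF b - stPetersburgCDF a := by
  have hset : {ω | X ω ≤ b} = {ω | X ω ≤ a} ∪ {ω | a < X ω ∧ X ω ≤ b} := by
    ext ω; simp only [Set.mem_setOf_eq, Set.mem_union]
    constructor
    · intro h; rcases le_or_gt (X ω) a with h' | h'
      · exact Or.inl h'
      · exact Or.inr ⟨h', h⟩
    · rintro (h | ⟨_, h⟩) <;> [exact le_trans h hab; exact h]
  have hdisj : Disjoint {ω | X ω ≤ a} {ω | a < X ω ∧ X ω ≤ b} := by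
    rw [Set.disjoint_left]; rintro ω h ⟨h', _⟩; exact absurd h (not_le.2 h')
  have hm2 : MeasurableSet {ω | a < X ω ∧ X ω ≤ b} := by
    have : {ω | a < X ω ∧ X ω ≤ b} = X ⁻¹' (Set.Ioc a b) := rfl
    rw [this]; exact hX measurableSet_Ioc
  have hu := measure_union (μ := ℙ) hdisj hm2
  rw [← hset] at hu
  have htr : (ℙ {ω | X ω ≤ b}).toReal
      = (ℙ {ω | X ω ≤ a}).toReal + (ℙ {ω | a < X ω ∧ X ω ≤ b}).toReal := by
    rw [hu, ENNReal.toReal_add (measure_ne_top _ _) (measure_ne_top _ _)]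
  rw [hcdf, hcdf] at htr
  linarith

lemma meas_Ioc_null {a b : ℝ} (h : stPetersburgCDF b = stPetersburgCDF a) :
    ℙ {ω | a < X ω ∧ X ω ≤ b} = 0 := by
  rcases le_or_gt a b with hab | hab
  · have := meas_Ioc_toReal hX hcdf a b hab
    rw [h, sub_self] at this
    exact ((ENNReal.toReal_eq_zero_iff _).1 this).resolve_right (measure_ne_top _ _)
  · have : {ω | a < X ω ∧ X ω ≤ b} = ∅ := by
      ext ω; simp only [Set.mem_setOf_eq, Set.mem_empty_iff_false, iff_false, not_and, not_le]
      intro h'; linarith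
    simp [this]

lemma meas_le_null {b : ℝ} (hb : b < 2) : ℙ {ω | X ω ≤ b} = 0 := by
  have h := hcdf b
  rw [cdf_lt_two hb] at h
  exact ((ENNReal.toReal_eq_zero_iff _).1 h).resolve_right (measure_ne_top _ _)

lemma meas_lt_two : ℙ {ω | X ω < 2} = 0 := by
  have hsub : {ω | X ω < 2} ⊆ ⋃ m : ℕ, {ω | X ω ≤ 2 - 1/(m+1)} := by
    intro ω hω
    simp only [Set.mem_setOf_eq] at hω
    obtain ⟨m, hm⟩ := exists_nat_one_div_lt (show (0:ℝ) < 2 - X ω by linarith)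
    exact Set.mem_iUnion.2 ⟨m, by simp only [Set.mem_setOf_eq]; push_cast at hm ⊢; linarith⟩
  refine le_antisymm ?_ (zero_le)
  calc ℙ {ω | X ω < 2} ≤ ℙ (⋃ m : ℕ, {ω | X ω ≤ 2 - 1/(m+1)}) := measure_mono hsub
  _ ≤ ∑' m : ℕ, ℙ {ω | X ω ≤ 2 - 1/(m+1)} := measure_iUnion_le _
  _ = 0 := by
      rw [ENNReal.tsum_eq_zero]
      intro m
      apply meas_le_null hX hcdf
      have : (0:ℝ) < 1/(m+1) := by positivity
      linarith

lemma meas_Ioo_null (k : ℕ) (hk : 1 ≤ k) :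
    ℙ {ω | (2:ℝ)^k < X ω ∧ X ω < (2:ℝ)^(k+1)} = 0 := by
  have hsub : {ω | (2:ℝ)^k < X ω ∧ X ω < (2:ℝ)^(k+1)}
      ⊆ ⋃ m : ℕ, {ω | (2:ℝ)^k < X ω ∧ X ω ≤ (2:ℝ)^(k+1) - 1/(m+1)} := by
    rintro ω ⟨h1, h2⟩
    obtain ⟨m, hm⟩ := exists_nat_one_div_lt (show (0:ℝ) < (2:ℝ)^(k+1) - X ω by linarith)
    refine Set.mem_iUnion.2 ⟨m, ⟨h1, ?_⟩⟩
    push_cast at hm ⊢; linarith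
  refine le_antisymm ?_ (zero_le)
  calc ℙ {ω | (2:ℝ)^k < X ω ∧ X ω < (2:ℝ)^(k+1)} ≤ _ := measure_mono hsub
  _ ≤ ∑' m : ℕ, ℙ {ω | (2:ℝ)^k < X ω ∧ X ω ≤ (2:ℝ)^(k+1) - 1/(m+1)} := measure_iUnion_le _
  _ = 0 := by
      rw [ENNReal.tsum_eq_zero]
      intro m
      set b := (2:ℝ)^(k+1) - 1/(m+1) with hb
      rcases le_or_gt b ((2:ℝ)^k) with hcase | hcase
      · have : {ω | (2:ℝ)^k < X ω ∧ X ω ≤ b} = ∅ := by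
          ext ω
          simp only [Set.mem_setOf_eq, Set.mem_empty_iff_false, iff_false, not_and, not_le]
          intro h'; linarith
        simp [this]
      · apply meas_Ioc_null hX hcdf
        have hb2 : b < (2:ℝ)^(k+1) := by
          have : (0:ℝ) < 1/(m+1) := by positivity
          simp only [hb]; linarith
        rw [cdf_eval hk (le_of_lt hcase) hb2, cdf_eval hk (le_refl _)
          (pow_lt_pow_right₀ (by norm_num) (by omega))]

/-- Almost surely, `X` takes values of the form `2^k`, `k ≥ 1`. -/
lemma meas_not_dyadic : ℙ {ω | ∀ k : ℕ, 1 ≤ k → X ω ≠ (2:ℝ)^k} = 0 := by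
  have hsub : {ω | ∀ k : ℕ, 1 ≤ k → X ω ≠ (2:ℝ)^k}
      ⊆ {ω | X ω < 2} ∪ ⋃ k : ℕ, {ω | (2:ℝ)^(k+1) < X ω ∧ X ω < (2:ℝ)^(k+2)} := by
    intro ω hω
    simp only [Set.mem_setOf_eq] at hω
    rcases lt_or_ge (X ω) 2 with h | h
    · exact Or.inl h
    · obtain ⟨n, hn1, hn2, hn3⟩ := exists_dyadic h
      right
      refine Set.mem_iUnion.2 ⟨n - 1, ?_⟩
      have hn' : n - 1 + 1 = n := by omega
      simp only [Set.mem_setOf_eq, hn']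
      have hne := hω n hn1
      constructor
      · exact lt_of_le_of_ne hn2 (fun h' => hne h'.symm)
      · have : n - 1 + 2 = n + 1 := by omega
        rw [this]; exact hn3
  refine le_antisymm ?_ (zero_le)
  calc ℙ {ω | ∀ k : ℕ, 1 ≤ k → X ω ≠ (2:ℝ)^k} ≤ _ := measure_mono hsub
  _ ≤ ℙ {ω | X ω < 2} + ℙ (⋃ k : ℕ, {ω | (2:ℝ)^(k+1) < X ω ∧ X ω < (2:ℝ)^(k+2)}) :=
      measure_union_le _ _
  _ ≤ 0 + ∑' k : ℕ, ℙ {ω | (2:ℝ)^(k+1) < X ω ∧ X ω < (2:ℝ)^(k+2)} := by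
      gcongr
      · exact le_of_eq (meas_lt_two hX hcdf)
      · exact measure_iUnion_le _
  _ = 0 := by
      rw [zero_add, ENNReal.tsum_eq_zero]
      intro k
      exact meas_Ioo_null hX hcdf (k+1) (by omega)

end Meas

lemma cdf_nonneg (t : ℝ) : 0 ≤ stPetersburgCDF t := by
  rcases lt_or_ge t 2 with h | h
  · rw [cdf_lt_two h]
  · obtain ⟨n, hn1, hn2, hn3⟩ := exists_dyadic h
    rw [cdf_eval hn1 hn2 hn3]
    have : ((2:ℝ)^n)⁻¹ ≤ 1 := by
      rw [inv_le_one_iff₀]; right; exact one_le_pow₀ one_le_two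
    linarith

section Key

variable {Ω : Type*} [MeasureSpace Ω] [IsProbabilityMeasure (ℙ : Measure Ω)]
  (X₁ X₂ : Ω → ℝ) (hX₁ : Measurable X₁) (hX₂ : Measurable X₂)
  (hind : IndepFun X₁ X₂ ℙ)
  (hcdf₁ : ∀ x : ℝ, (ℙ {ω | X₁ ω ≤ x}).toReal = stPetersburgCDF x)
  (hcdf₂ : ∀ x : ℝ, (ℙ {ω | X₂ ω ≤ x}).toReal = stPetersburgCDF x)

include hX₁ hX₂ hind hcdf₁ hcdf₂

lemma key_formula (m : ℕ) {x : ℝ} (h1 : (2:ℝ)^(m+1) ≤ x) (h2 : x < (2:ℝ)^(m+2)) :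
    (ℙ {ω | X₁ ω + X₂ ω ≤ x}).toReal
      = (1 - ((2:ℝ)^m)⁻¹)^2
        + 2 * ((2:ℝ)^(m+1))⁻¹ * stPetersburgCDF (x - (2:ℝ)^(m+1)) := by
  set c : ℝ := (2:ℝ)^m with hc
  set d : ℝ := (2:ℝ)^(m+1) with hd
  set t : ℝ := x - d with ht
  have hcd : c < d := by
    rw [hc, hd]; exact pow_lt_pow_right₀ (by norm_num) (by omega)
  have hd2 : (2:ℝ)^(m+2) = 2 * d := by rw [hd]; ring
  have hdc : d = 2 * c := by rw [hc, hd]; ring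
  have htd : t < d := by rw [ht]; linarith [h2, hd2]
  have hcpos : (0:ℝ) < c := by positivity
  set A : Set Ω := {ω | X₁ ω ≤ c ∧ X₂ ω ≤ c} with hA
  set B : Set Ω := {ω | (c < X₁ ω ∧ X₁ ω ≤ d) ∧ X₂ ω ≤ t} with hB
  set C : Set Ω := {ω | X₁ ω ≤ t ∧ (c < X₂ ω ∧ X₂ ω ≤ d)} with hC
  set E : Set Ω := {ω | X₁ ω + X₂ ω ≤ x} with hE
  set N₁ : Set Ω := {ω | ∀ k : ℕ, 1 ≤ k → X₁ ω ≠ (2:ℝ)^k} with hN₁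
  set N₂ : Set Ω := {ω | ∀ k : ℕ, 1 ≤ k → X₂ ω ≠ (2:ℝ)^k} with hN₂
  -- the dyadic values in `(c, d]` equal `d`
  have hdyadic : ∀ y : ℝ, (∃ k : ℕ, 1 ≤ k ∧ y = (2:ℝ)^k) → c < y → y ≤ d → y = d := by
    rintro y ⟨k, hk1, rfl⟩ hy1 hy2
    have hk2 : m < k := by
      by_contra hcon; push_neg at hcon
      exact absurd (pow_le_pow_right₀ (by norm_num : (1:ℝ) ≤ 2) hcon) (not_le.2 hy1)
    have hk3 : k ≤ m + 1 := by
      by_contra hcon; push_neg at hcon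
      have h1' : (2:ℝ)^(m+2) ≤ 2^k := pow_le_pow_right₀ one_le_two (by omega)
      have h2' : d < (2:ℝ)^(m+2) := by
        rw [hd]; exact pow_lt_pow_right₀ (by norm_num) (by omega)
      linarith
    have : k = m + 1 := by omega
    rw [this]
  -- E equals A ∪ B ∪ C up to null sets
  have hsub1 : A ∪ (B ∪ C) ⊆ E := by
    rintro ω (⟨ha1, ha2⟩ | ⟨⟨_, hb1⟩, hb2⟩ | ⟨hc1, _, hc2⟩) <;>
      simp only [hE, Set.mem_setOf_eq] <;> [skip; skip; skip]
    · have : X₁ ω + X₂ ω ≤ 2 * c := by linarith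
      linarith [hdc, h1]
    · linarith [ht]
    · linarith [ht]
  have hsub2 : E ⊆ (A ∪ (B ∪ C)) ∪ (N₁ ∪ N₂) := by
    intro ω hω
    simp only [hE, Set.mem_setOf_eq] at hω
    by_cases hn1 : ∀ k : ℕ, 1 ≤ k → X₁ ω ≠ (2:ℝ)^k
    · exact Or.inr (Or.inl hn1)
    by_cases hn2 : ∀ k : ℕ, 1 ≤ k → X₂ ω ≠ (2:ℝ)^k
    · exact Or.inr (Or.inr hn2)
    push_neg at hn1 hn2
    obtain ⟨i, hi1, hi2⟩ := hn1
    obtain ⟨j, hj1, hj2⟩ := hn2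
    have hapos : (2:ℝ) ≤ X₁ ω := by
      rw [hi2]; calc (2:ℝ) = 2^1 := (pow_one 2).symm
      _ ≤ 2^i := pow_le_pow_right₀ one_le_two hi1
    have hbpos : (2:ℝ) ≤ X₂ ω := by
      rw [hj2]; calc (2:ℝ) = 2^1 := (pow_one 2).symm
      _ ≤ 2^j := pow_le_pow_right₀ one_le_two hj1
    have had : X₁ ω ≤ d := by
      have h' : X₁ ω < 2 * d := by linarith [hd2, h2]
      have : (2:ℝ)^i < (2:ℝ)^(m+2) := by rw [← hi2, hd2]; linarith
      have him : i ≤ m + 1 := by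
        by_contra hcon; push_neg at hcon
        exact absurd (pow_le_pow_right₀ (by norm_num : (1:ℝ) ≤ 2) hcon) (not_le.2 this)
      rw [hi2, hd]; exact pow_le_pow_right₀ one_le_two him
    have hbd : X₂ ω ≤ d := by
      have h' : X₂ ω < 2 * d := by linarith [hd2, h2]
      have : (2:ℝ)^j < (2:ℝ)^(m+2) := by rw [← hj2, hd2]; linarith
      have hjm : j ≤ m + 1 := by
        by_contra hcon; push_neg at hcon
        exact absurd (pow_le_pow_right₀ (by norm_num : (1:ℝ) ≤ 2) hcon) (not_le.2 this)
      rw [hj2, hd]; exact pow_le_pow_right₀ one_le_two hjm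
    left
    by_cases hac : X₁ ω ≤ c
    · by_cases hbc : X₂ ω ≤ c
      · exact Or.inl ⟨hac, hbc⟩
      · push_neg at hbc
        have : X₂ ω = d := hdyadic _ ⟨j, hj1, hj2⟩ hbc hbd
        exact Or.inr (Or.inr ⟨by rw [ht]; linarith, hbc, hbd⟩)
    · push_neg at hac
      have : X₁ ω = d := hdyadic _ ⟨i, hi1, hi2⟩ hac had
      exact Or.inr (Or.inl ⟨⟨hac, had⟩, by rw [ht]; linarith⟩)
  have hN₁0 : ℙ N₁ = 0 := meas_not_dyadic hX₁ hcdf₁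
  have hN₂0 : ℙ N₂ = 0 := meas_not_dyadic hX₂ hcdf₂
  have hEeq : ℙ E = ℙ (A ∪ (B ∪ C)) := by
    refine le_antisymm ?_ (measure_mono hsub1)
    calc ℙ E ≤ ℙ ((A ∪ (B ∪ C)) ∪ (N₁ ∪ N₂)) := measure_mono hsub2
    _ ≤ ℙ (A ∪ (B ∪ C)) + ℙ (N₁ ∪ N₂) := measure_union_le _ _
    _ = ℙ (A ∪ (B ∪ C)) := by rw [measure_union_null hN₁0 hN₂0, add_zero]
  -- decompose the union
  have hmB : MeasurableSet B := by
    have : B = X₁ ⁻¹' (Set.Ioc c d) ∩ X₂ ⁻¹' (Set.Iic t) := by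
      ext ω; simp [hB, Set.mem_Ioc, Set.mem_Iic, and_assoc]
    rw [this]; exact (hX₁ measurableSet_Ioc).inter (hX₂ measurableSet_Iic)
  have hmC : MeasurableSet C := by
    have : C = X₁ ⁻¹' (Set.Iic t) ∩ X₂ ⁻¹' (Set.Ioc c d) := by
      ext ω; simp [hC, Set.mem_Ioc, Set.mem_Iic]
    rw [this]; exact (hX₁ measurableSet_Iic).inter (hX₂ measurableSet_Ioc)
  have hdisjA : Disjoint A (B ∪ C) := by
    rw [Set.disjoint_left]
    rintro ω ⟨ha1, ha2⟩ (⟨⟨hb, _⟩, _⟩ | ⟨_, hcc, _⟩)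
    · exact absurd ha1 (not_le.2 hb)
    · exact absurd ha2 (not_le.2 hcc)
  have hBC0 : ℙ (B ∩ C) = 0 := by
    have hsubBC : B ∩ C ⊆ {ω | c < X₁ ω ∧ X₁ ω ≤ t} := by
      rintro ω ⟨⟨⟨hb1, _⟩, _⟩, ⟨hc1, _⟩⟩
      exact ⟨hb1, hc1⟩
    refine measure_mono_null hsubBC ?_
    rcases lt_or_ge t c with hcase | hcase
    · have hempty : {ω | c < X₁ ω ∧ X₁ ω ≤ t} = ∅ := by
        ext ω
        simp only [Set.mem_setOf_eq, Set.mem_empty_iff_false, iff_false, not_and, not_le]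
        intro h'; linarith
      simp [hempty]
    · apply meas_Ioc_null hX₁ hcdf₁
      rw [cdf_eval' m (show (2:ℝ)^m ≤ t from hc ▸ hcase) (show t < (2:ℝ)^(m+1) from hd ▸ htd),
        cdf_eval' m (le_of_eq hc.symm) (show c < (2:ℝ)^(m+1) from hd ▸ hcd)]
  have hPBC : ℙ (B ∪ C) = ℙ B + ℙ C := measure_union₀ hmC.nullMeasurableSet hBC0
  have hPA : ℙ (A ∪ (B ∪ C)) = ℙ A + (ℙ B + ℙ C) := by
    rw [measure_union hdisjA (hmB.union hmC), hPBC]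
  have hprodA : ℙ A = ℙ {ω | X₁ ω ≤ c} * ℙ {ω | X₂ ω ≤ c} := by
    have hset : A = X₁ ⁻¹' (Set.Iic c) ∩ X₂ ⁻¹' (Set.Iic c) := by
      ext ω; simp [hA, Set.mem_Iic]
    rw [hset]
    exact hind.measure_inter_preimage_eq_mul _ _ measurableSet_Iic measurableSet_Iic
  have hprodB : ℙ B = ℙ {ω | c < X₁ ω ∧ X₁ ω ≤ d} * ℙ {ω | X₂ ω ≤ t} := by
    have hset : B = X₁ ⁻¹' (Set.Ioc c d) ∩ X₂ ⁻¹' (Set.Iic t) := by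
      ext ω; simp [hB, Set.mem_Ioc, Set.mem_Iic, and_assoc]
    rw [hset]
    exact hind.measure_inter_preimage_eq_mul _ _ measurableSet_Ioc measurableSet_Iic
  have hprodC : ℙ C = ℙ {ω | X₁ ω ≤ t} * ℙ {ω | c < X₂ ω ∧ X₂ ω ≤ d} := by
    have hset : C = X₁ ⁻¹' (Set.Iic t) ∩ X₂ ⁻¹' (Set.Ioc c d) := by
      ext ω; simp [hC, Set.mem_Ioc, Set.mem_Iic]
    rw [hset]
    exact hind.measure_inter_preimage_eq_mul _ _ measurableSet_Iic measurableSet_Ioc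
  have hFc : stPetersburgCDF c = 1 - ((2:ℝ)^m)⁻¹ :=
    cdf_eval' m (le_of_eq hc.symm) (show c < (2:ℝ)^(m+1) from hd ▸ hcd)
  have hFd : stPetersburgCDF d = 1 - ((2:ℝ)^(m+1))⁻¹ :=
    cdf_eval (n := m+1) (by omega) (le_of_eq hd.symm)
      (show d < (2:ℝ)^(m+2) from by rw [hd]; exact pow_lt_pow_right₀ (by norm_num) (by omega))
  have hIoc1 : (ℙ {ω | c < X₁ ω ∧ X₁ ω ≤ d}).toReal
      = stPetersburgCDF d - stPetersburgCDF c := meas_Ioc_toReal hX₁ hcdf₁ c d (le_of_lt hcd)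
  have hIoc2 : (ℙ {ω | c < X₂ ω ∧ X₂ ω ≤ d}).toReal
      = stPetersburgCDF d - stPetersburgCDF c := meas_Ioc_toReal hX₂ hcdf₂ c d (le_of_lt hcd)
  have hfinal : (ℙ E).toReal
      = stPetersburgCDF c * stPetersburgCDF c
        + ((stPetersburgCDF d - stPetersburgCDF c) * stPetersburgCDF t
          + stPetersburgCDF t * (stPetersburgCDF d - stPetersburgCDF c)) := by
    rw [hEeq, hPA, ENNReal.toReal_add (measure_ne_top _ _)
        (by exact ENNReal.add_ne_top.2 ⟨measure_ne_top _ _, measure_ne_top _ _⟩),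
      ENNReal.toReal_add (measure_ne_top _ _) (measure_ne_top _ _),
      hprodA, hprodB, hprodC, ENNReal.toReal_mul, ENNReal.toReal_mul, ENNReal.toReal_mul,
      hcdf₁ c, hcdf₂ c, hcdf₂ t, hcdf₁ t, hIoc1, hIoc2]
  have hhalf : ((2:ℝ)^(m+1))⁻¹ * 2 = ((2:ℝ)^m)⁻¹ := by
    rw [pow_succ]
    have : (2:ℝ)^m ≠ 0 := by positivity
    field_simp
  rw [hfinal, hFc, hFd, hc, hd]
  linear_combination (-2 * stPetersburgCDF t) * hhalf



lemma ratio_eval (m : ℕ) {x : ℝ} (h1 : (2:ℝ)^(m+1) ≤ x) (h2 : x < (2:ℝ)^(m+2)) :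
    (1 - (ℙ {ω | X₁ ω + X₂ ω ≤ x}).toReal) / (1 - stPetersburgCDF x)
      = 4 - 2 * ((2:ℝ)^m)⁻¹ - 2 * stPetersburgCDF (x - (2:ℝ)^(m+1)) := by
  rw [key_formula X₁ X₂ hX₁ hX₂ hind hcdf₁ hcdf₂ m h1 h2,
    cdf_eval (n := m+1) (by omega) h1 h2]
  have h0 : ((2:ℝ)^(m+1)) ≠ 0 := by positivity
  have hm0 : ((2:ℝ)^m) ≠ 0 := by positivity
  field_simp [pow_succ]
  ring

end Key

theorem stmt_4 {Ω : Type*} [MeasureSpace Ω] [IsProbabilityMeasure (ℙ : Measure Ω)]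
    (X₁ X₂ : Ω → ℝ) (hX₁ : Measurable X₁) (hX₂ : Measurable X₂)
    (hind : IndepFun X₁ X₂ ℙ)
    (hcdf₁ : ∀ x : ℝ, (ℙ {ω | X₁ ω ≤ x}).toReal = stPetersburgCDF x)
    (hcdf₂ : ∀ x : ℝ, (ℙ {ω | X₂ ω ≤ x}).toReal = stPetersburgCDF x) :
    limsup (fun x : ℝ =>
        (1 - (ℙ {ω | X₁ ω + X₂ ω ≤ x}).toReal) / (1 - stPetersburgCDF x)) atTop = 4 ∧
    liminf (fun x : ℝ =>
        (1 - (ℙ {ω | X₁ ω + X₂ ω ≤ x}).toReal) / (1 - stPetersburgCDF x)) atTop = 2 ∧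
    ¬ Tendsto (fun x : ℝ =>
        (1 - (ℙ {ω | X₁ ω + X₂ ω ≤ x}).toReal) / (1 - stPetersburgCDF x)) atTop (nhds 2) := by
  set f : ℝ → ℝ := fun x =>
    (1 - (ℙ {ω | X₁ ω + X₂ ω ≤ x}).toReal) / (1 - stPetersburgCDF x) with hf
  -- representation of large x
  have hrep : ∀ x : ℝ, 2 ≤ x → ∃ m : ℕ, (2:ℝ)^(m+1) ≤ x ∧ x < (2:ℝ)^(m+2) := by
    intro x hx
    obtain ⟨n, hn1, hn2, hn3⟩ := exists_dyadic hx
    refine ⟨n - 1, ?_, ?_⟩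
    · rwa [show n - 1 + 1 = n by omega]
    · rwa [show n - 1 + 2 = n + 1 by omega]
  have hval : ∀ (m : ℕ) (x : ℝ), (2:ℝ)^(m+1) ≤ x → x < (2:ℝ)^(m+2) →
      f x = 4 - 2 * ((2:ℝ)^m)⁻¹ - 2 * stPetersburgCDF (x - (2:ℝ)^(m+1)) := fun m x h1 h2 =>
    ratio_eval X₁ X₂ hX₁ hX₂ hind hcdf₁ hcdf₂ m h1 h2
  -- global bounds
  have hub : ∀ x : ℝ, 2 ≤ x → f x ≤ 4 := by
    intro x hx
    obtain ⟨m, h1, h2⟩ := hrep x hx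
    rw [hval m x h1 h2]
    have h3 : (0:ℝ) < ((2:ℝ)^m)⁻¹ := by positivity
    have h4 := cdf_nonneg (x - (2:ℝ)^(m+1))
    linarith
  have hlb : ∀ x : ℝ, 2 ≤ x → 2 ≤ f x := by
    intro x hx
    obtain ⟨m, h1, h2⟩ := hrep x hx
    rw [hval m x h1 h2]
    have h4 : stPetersburgCDF (x - (2:ℝ)^(m+1)) ≤ 1 - ((2:ℝ)^m)⁻¹ :=
      cdf_lt_one_bound (by linarith [show (2:ℝ)^(m+2) = 2 * (2:ℝ)^(m+1) from by ring])
    linarith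
  have hub' : ∀ᶠ x in (atTop : Filter ℝ), f x ≤ 4 :=
    (eventually_ge_atTop 2).mono hub
  have hlb' : ∀ᶠ x in (atTop : Filter ℝ), 2 ≤ f x :=
    (eventually_ge_atTop 2).mono hlb
  have hbdd : IsBoundedUnder (· ≤ ·) (atTop : Filter ℝ) f :=
    isBoundedUnder_of_eventually_le hub'
  have hbdd' : IsBoundedUnder (· ≥ ·) (atTop : Filter ℝ) f :=
    isBoundedUnder_of_eventually_ge hlb'
  have hcob : IsCoboundedUnder (· ≤ ·) (atTop : Filter ℝ) f :=
    isCoboundedUnder_le_of_eventually_le _ hlb'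
  have hcob' : IsCoboundedUnder (· ≥ ·) (atTop : Filter ℝ) f :=
    isCoboundedUnder_ge_of_eventually_le _ hub'
  -- values at powers of two: close to 4
  have hpow : ∀ m : ℕ, f ((2:ℝ)^(m+1)) = 4 - 2 * ((2:ℝ)^m)⁻¹ := by
    intro m
    rw [hval m ((2:ℝ)^(m+1)) (le_refl _) (pow_lt_pow_right₀ (by norm_num) (by omega)),
      sub_self, cdf_lt_two (by norm_num)]
    ring
  -- values at 3·2^m : equal to 2
  have h3pow : ∀ m : ℕ, f (3 * (2:ℝ)^m) = 2 := by
    intro m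
    have e1 : (2:ℝ)^(m+1) ≤ 3 * (2:ℝ)^m := by
      rw [pow_succ]; nlinarith [pow_pos (show (0:ℝ) < 2 by norm_num) m]
    have e2 : 3 * (2:ℝ)^m < (2:ℝ)^(m+2) := by
      rw [pow_succ, pow_succ]; nlinarith [pow_pos (show (0:ℝ) < 2 by norm_num) m]
    rw [hval m _ e1 e2]
    have e3 : 3 * (2:ℝ)^m - (2:ℝ)^(m+1) = (2:ℝ)^m := by rw [pow_succ]; ring
    rw [e3, cdf_eval' m (le_refl _) (pow_lt_pow_right₀ (by norm_num) (by omega))]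
    ring
  have hmono : ∀ N : ℝ, ∃ m : ℕ, N ≤ (2:ℝ)^m ∧ N ≤ (m:ℝ) := by
    intro N
    obtain ⟨k, hk⟩ := exists_nat_gt N
    refine ⟨k, le_trans (le_of_lt hk) ?_, le_of_lt hk⟩
    exact_mod_cast le_of_lt (Nat.lt_two_pow_self (n := k))
  -- limsup = 4
  have hlimsup : limsup f atTop = 4 := by
    refine le_antisymm (limsup_le_of_le hcob hub') ?_
    by_contra hlt
    push_neg at hlt
    set L := limsup f atTop with hL
    have hε : (0:ℝ) < (4 - L) / 2 := by linarith
    have hfreq : ∃ᶠ x in (atTop : Filter ℝ), 4 - (4 - L)/2 ≤ f x := by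
      rw [frequently_atTop]
      intro N
      obtain ⟨m, hm1, _⟩ := hmono (max N (2 / ((4 - L)/2/2)))
      have hm2 : N ≤ (2:ℝ)^m := le_trans (le_max_left _ _) hm1
      have hm3 : 2 / ((4 - L)/2/2) ≤ (2:ℝ)^m := le_trans (le_max_right _ _) hm1
      refine ⟨(2:ℝ)^(m+1), ?_, ?_⟩
      · calc N ≤ (2:ℝ)^m := hm2
        _ ≤ (2:ℝ)^(m+1) := pow_le_pow_right₀ one_le_two (by omega)
      · rw [hpow m]
        have hp : (0:ℝ) < (2:ℝ)^m := by positivity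
        have : 2 * ((2:ℝ)^m)⁻¹ ≤ (4 - L)/2 := by
          have h2' : (0:ℝ) < (4 - L)/2/2 := by linarith
          rw [div_le_iff₀ h2'] at hm3
          calc 2 * ((2:ℝ)^m)⁻¹ = 2 / (2:ℝ)^m := by ring
          _ ≤ (4 - L)/2 := by
              rw [div_le_iff₀ hp]
              nlinarith
        linarith
    have := le_limsup_of_frequently_le hfreq hbdd
    rw [← hL] at this
    linarith
  -- liminf = 2
  have hliminf : liminf f atTop = 2 := by
    refine le_antisymm ?_ (le_liminf_of_le hcob' hlb')
    refine liminf_le_of_frequently_le ?_ hbdd'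
    rw [frequently_atTop]
    intro N
    obtain ⟨m, hm1, _⟩ := hmono N
    refine ⟨3 * (2:ℝ)^m, ?_, le_of_eq (h3pow m)⟩
    nlinarith [pow_pos (show (0:ℝ) < 2 by norm_num) m]
  refine ⟨hlimsup, hliminf, ?_⟩
  intro htend
  have := htend.limsup_eq
  rw [hlimsup] at this
  norm_num at this
end

section
/- Let Xₙ* be the maximum of n iid St. Petersburg random variables, and set γₙ = n/2^{⌈log₂ n⌉}. Then sup_{j ∈ ℤ} |P{Xₙ* = 2^{⌈log₂ n⌉ + j}} - e^{-γₙ 2^{-j}}(1 - e^{-γₙ 2^{-j}})| = O(1/n) as n → ∞. -/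
open MeasureTheory ProbabilityTheory Real ENNReal Finset

section StP
variable {Ω : Type*} [MeasureSpace Ω] [IsProbabilityMeasure (ℙ : Measure Ω)]

omit [IsProbabilityMeasure (ℙ : Measure Ω)] in
lemma stp_atom_prob (Y : Ω → ℝ) (hpmf : ∀ k : ℕ, 1 ≤ k → ℙ {ω | Y ω = 2 ^ k} = 1 / 2 ^ k)
    (k : ℕ) : ℙ (Y ⁻¹' {(2:ℝ) ^ (k+1)}) = 2⁻¹ ^ (k+1) := by
  have h := hpmf (k+1) (by omega)
  have hs : {ω | Y ω = 2 ^ (k+1)} = Y ⁻¹' {(2:ℝ) ^ (k+1)} := by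
    ext ω; simp [Set.mem_preimage]
  rw [hs] at h
  rw [h, one_div, ← ENNReal.inv_pow]

omit [MeasureSpace Ω] [IsProbabilityMeasure (ℙ : Measure Ω)] in
lemma stp_atoms_disjoint (Y : Ω → ℝ) :
    Pairwise (Function.onFun Disjoint (fun k => Y ⁻¹' {(2:ℝ) ^ (k+1)})) := by
  intro k l hkl
  have hne : (2:ℝ) ^ (k+1) ≠ 2 ^ (l+1) :=
    fun h => hkl (by simpa using (pow_right_strictMono₀ (a := (2:ℝ)) (one_lt_two : (1:ℝ) < 2)).injective h)
  exact (Set.disjoint_singleton.mpr hne).preimage Y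

lemma stp_union_atoms (Y : Ω → ℝ) (hY : Measurable Y)
    (hpmf : ∀ k : ℕ, 1 ≤ k → ℙ {ω | Y ω = 2 ^ k} = 1 / 2 ^ k) :
    ℙ (⋃ k : ℕ, Y ⁻¹' {(2:ℝ) ^ (k+1)}) = 1 := by
  rw [measure_iUnion (stp_atoms_disjoint Y) (fun k => hY (measurableSet_singleton _))]
  have : ∀ k : ℕ, ℙ (Y ⁻¹' {(2:ℝ) ^ (k+1)}) = (2:ℝ≥0∞)⁻¹ ^ (k+1) := stp_atom_prob Y hpmf
  rw [tsum_congr this, ENNReal.tsum_geometric_add_one, ENNReal.one_sub_inv_two, inv_inv,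
    ENNReal.inv_mul_cancel two_ne_zero ENNReal.ofNat_ne_top]

lemma stp_cdf_pow (Y : Ω → ℝ) (hY : Measurable Y)
    (hpmf : ∀ k : ℕ, 1 ≤ k → ℙ {ω | Y ω = 2 ^ k} = 1 / 2 ^ k) (M : ℕ) :
    ℙ (Y ⁻¹' Set.Iic ((2:ℝ) ^ M)) = 1 - 2⁻¹ ^ M := by
  set S := Y ⁻¹' Set.Iic ((2:ℝ) ^ M) with hS
  set V := ⋃ k : ℕ, Y ⁻¹' {(2:ℝ) ^ (M + k + 1)} with hV
  have hVmeas : MeasurableSet V := MeasurableSet.iUnion fun k => hY (measurableSet_singleton _)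
  have hSmeas : MeasurableSet S := hY measurableSet_Iic
  have hVle : ℙ V = 2⁻¹ ^ M := by
    rw [hV, measure_iUnion ?disj (fun k => hY (measurableSet_singleton _))]
    case disj =>
      intro k l hkl
      exact stp_atoms_disjoint Y (by omega : M + k ≠ M + l)
    have : ∀ k : ℕ, ℙ (Y ⁻¹' {(2:ℝ) ^ (M + k + 1)}) = (2:ℝ≥0∞)⁻¹ ^ (M + k + 1) :=
      fun k => stp_atom_prob Y hpmf (M + k)
    rw [tsum_congr this]
    have h2 : ∀ k : ℕ, (2:ℝ≥0∞)⁻¹ ^ (M + k + 1) = 2⁻¹ ^ (M+1) * 2⁻¹ ^ k := by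
      intro k; rw [← pow_add]; ring_nf
    rw [tsum_congr h2, ENNReal.tsum_mul_left, ENNReal.tsum_geometric,
      ENNReal.one_sub_inv_two, inv_inv, pow_succ, mul_assoc,
      ENNReal.inv_mul_cancel two_ne_zero ENNReal.ofNat_ne_top, mul_one]
  have hdisj : Disjoint S V := by
    rw [Set.disjoint_left]
    rintro ω hωS hωV
    simp only [hV, Set.mem_iUnion, Set.mem_preimage, Set.mem_singleton_iff] at hωV
    obtain ⟨k, hk⟩ := hωV
    have h1 : Y ω ≤ 2 ^ M := hωS
    rw [hk] at h1
    exact absurd h1 (not_le.mpr (pow_lt_pow_right₀ one_lt_two (by omega)))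
  have hcover : (⋃ k : ℕ, Y ⁻¹' {(2:ℝ) ^ (k+1)}) ⊆ S ∪ V := by
    rintro ω hω
    simp only [Set.mem_iUnion, Set.mem_preimage, Set.mem_singleton_iff] at hω
    obtain ⟨k, hk⟩ := hω
    by_cases hkM : k + 1 ≤ M
    · left
      simp only [hS, Set.mem_preimage, Set.mem_Iic, hk]
      exact pow_le_pow_right₀ one_le_two hkM
    · right
      simp only [hV, Set.mem_iUnion, Set.mem_preimage, Set.mem_singleton_iff]
      exact ⟨k - M, by rw [hk]; congr 1; omega⟩
  have hub : ℙ S + ℙ V ≤ 1 := by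
    rw [← measure_union hdisj hVmeas]
    exact prob_le_one
  have hlb : 1 ≤ ℙ S + ℙ V := by
    calc (1:ℝ≥0∞) = ℙ (⋃ k : ℕ, Y ⁻¹' {(2:ℝ) ^ (k+1)}) := (stp_union_atoms Y hY hpmf).symm
      _ ≤ ℙ (S ∪ V) := measure_mono hcover
      _ ≤ ℙ S + ℙ V := measure_union_le _ _
  have heq : ℙ S + 2⁻¹ ^ M = 1 := by rw [← hVle]; exact le_antisymm hub hlb
  exact ENNReal.eq_sub_of_add_eq (ENNReal.pow_ne_top (by simp)) heq

end StP

lemma stp_approx_key (n : ℕ) (hn : 1 ≤ n) (p : ℝ) (hp0 : 0 ≤ p) (hp1 : p ≤ 1) :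
    (1 - p) ^ n ≤ exp (-(n * p)) ∧ exp (-(n * p)) - (1 - p) ^ n ≤ 108 / n := by
  have hb0 : (0:ℝ) < exp (-p) := exp_pos _
  have hb1 : exp (-p) ≤ 1 := exp_le_one_iff.mpr (by linarith)
  have ha0 : (0:ℝ) ≤ 1 - p := by linarith
  have hab : 1 - p ≤ exp (-p) := by
    have := add_one_le_exp (-p); linarith
  have hexp : exp (-(n * p)) = exp (-p) ^ n := by
    rw [← exp_nat_mul]; ring_nf
  constructor
  · rw [hexp]; exact pow_le_pow_left₀ ha0 hab n
  -- difference bound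
  have hba : exp (-p) - (1 - p) ≤ p ^ 2 := by
    have h1 : (0:ℝ) < 1 + p := by linarith
    have h2 : exp (-p) ≤ (1 + p)⁻¹ := by
      rw [exp_neg]
      apply inv_anti₀ h1 (by have := add_one_le_exp p; linarith)
    have h3 : (1 + p)⁻¹ - (1 - p) = p ^ 2 / (1 + p) := by
      field_simp; ring
    have h4 : p ^ 2 / (1 + p) ≤ p ^ 2 := by
      apply div_le_self (sq_nonneg p) (by linarith)
    linarith
  have key : exp (-p) ^ n - (1 - p) ^ n ≤ n * (p ^ 2 * exp (-p) ^ (n - 1)) := by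
    have hg := geom_sum₂_mul (exp (-p)) (1 - p) n
    have hsum : (∑ i ∈ range n, exp (-p) ^ i * (1 - p) ^ (n - 1 - i))
        ≤ n * exp (-p) ^ (n - 1) := by
      calc (∑ i ∈ range n, exp (-p) ^ i * (1 - p) ^ (n - 1 - i))
          ≤ ∑ i ∈ range n, exp (-p) ^ (n - 1) := by
            apply Finset.sum_le_sum
            intro i hi
            have hi' : i ≤ n - 1 := by
              have := Finset.mem_range.mp hi; omega
            calc exp (-p) ^ i * (1 - p) ^ (n - 1 - i)
                ≤ exp (-p) ^ i * exp (-p) ^ (n - 1 - i) := by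
                  apply mul_le_mul_of_nonneg_left (pow_le_pow_left₀ ha0 hab _) (le_of_lt (pow_pos hb0 _))
              _ = exp (-p) ^ (n - 1) := by rw [← pow_add]; congr 1; omega
        _ = n * exp (-p) ^ (n - 1) := by
            rw [Finset.sum_const, Finset.card_range]; simp
    have hsumnn : (0:ℝ) ≤ ∑ i ∈ range n, exp (-p) ^ i * (1 - p) ^ (n - 1 - i) := by
      apply Finset.sum_nonneg; intro i _; positivity
    calc exp (-p) ^ n - (1 - p) ^ n
        = (∑ i ∈ range n, exp (-p) ^ i * (1 - p) ^ (n - 1 - i)) * (exp (-p) - (1 - p)) := hg.symm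
      _ ≤ (n * exp (-p) ^ (n - 1)) * (p ^ 2) := by
          apply mul_le_mul hsum hba (by linarith) (by positivity)
      _ = n * (p ^ 2 * exp (-p) ^ (n - 1)) := by ring
  rw [hexp]
  have hn0 : (0:ℝ) < n := by exact_mod_cast hn
  by_cases hc : (n:ℝ) * p ≤ 2
  · have hple : p ≤ 2 / n := by
      rw [le_div_iff₀ hn0]; linarith
    have : (n:ℝ) * (p ^ 2 * exp (-p) ^ (n - 1)) ≤ n * p * p := by
      have h1 : exp (-p) ^ (n-1) ≤ 1 := pow_le_one₀ (le_of_lt hb0) hb1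
      have h2 : p ^ 2 * exp (-p) ^ (n - 1) ≤ p ^ 2 := by
        nlinarith [sq_nonneg p, pow_nonneg (le_of_lt hb0) (n-1)]
      nlinarith
    have : (n:ℝ) * p * p ≤ 2 * (2 / n) := by
      apply mul_le_mul hc hple hp0 (by norm_num)
    have h108 : 2 * (2/(n:ℝ)) ≤ 108 / n := by
      have : 2 * (2/(n:ℝ)) = 4 / n := by ring
      rw [this]
      gcongr <;> norm_num
    linarith
  · push_neg at hc
    set t : ℝ := n * p with ht
    have htp : 2 * p ≤ t := by nlinarith
    have hexpb : exp (-p) ^ (n - 1) ≤ exp (-(t/2)) := by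
      have : exp (-p) ^ (n-1) = exp (-((n-1:ℕ) * p)) := by
        rw [← exp_nat_mul]; ring_nf
      rw [this]
      apply exp_le_exp.mpr
      have hcast : ((n - 1 : ℕ) : ℝ) = (n : ℝ) - 1 := by
        have : 1 ≤ n := hn
        push_cast [this]; ring
      rw [hcast]
      nlinarith
    -- t^2 * exp(-t/2) ≤ 108
    have hs : (1:ℝ) < t / 2 := by linarith
    have hcube : exp (t/2) ≥ (t/2)^3 / 27 := by
      have h1 : exp (t/6) ≥ t/6 + 1 := by have := add_one_le_exp (t/6); linarith
      have h2 : exp (t/2) = exp (t/6) ^ 3 := by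
        rw [← exp_nat_mul]; norm_num; ring_nf
      rw [h2]
      have h3 : (t/6:ℝ) ≥ 0 := by linarith
      calc exp (t/6) ^ 3 ≥ (t/6 + 1) ^ 3 := pow_le_pow_left₀ (by linarith) (by linarith) 3
        _ ≥ (t/2)^3/27 := by nlinarith
    have hfin : (n:ℝ) * (p ^ 2 * exp (-p) ^ (n - 1)) ≤ 108 / n := by
      have h1 : (n:ℝ) * (p ^ 2 * exp (-p) ^ (n - 1)) ≤ n * (p^2 * exp (-(t/2))) := by
        have := mul_le_mul_of_nonneg_left hexpb (sq_nonneg p)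
        nlinarith
      have h2 : (n:ℝ) * (p^2 * exp (-(t/2))) = t^2 * exp (-(t/2)) / n := by
        field_simp [ht]; ring
      have h3 : t^2 * exp (-(t/2)) ≤ 108 := by
        have he : exp (-(t/2)) = (exp (t/2))⁻¹ := by rw [exp_neg]
        have hcpos : (0:ℝ) < (t/2)^3 / 27 := by positivity
        have h4 : exp (-(t/2)) ≤ 27 / (t/2)^3 := by
          rw [he]
          have := inv_anti₀ hcpos hcube
          calc (exp (t/2))⁻¹ ≤ ((t/2)^3/27)⁻¹ := this
            _ = 27 / (t/2)^3 := by rw [inv_div]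
        have h5 : t^2 * exp (-(t/2)) ≤ t^2 * (27/(t/2)^3) :=
          mul_le_mul_of_nonneg_left h4 (sq_nonneg t)
        have h6 : t^2 * (27/(t/2)^3) = 216 / t := by
          field_simp; ring
        have h7 : (216:ℝ) / t ≤ 108 := by
          rw [div_le_iff₀ (by linarith)]; linarith
        linarith
      have h8 : t^2 * exp (-(t/2)) / n ≤ 108 / n := by gcongr
      linarith
    linarith

theorem stmt_8 {Ω : Type*} [MeasureSpace Ω] [IsProbabilityMeasure (ℙ : Measure Ω)]
    (X : ℕ → Ω → ℝ) (hX : ∀ i, Measurable (X i))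
    (hind : iIndepFun X ℙ)
    (hpmf : ∀ i, ∀ k : ℕ, 1 ≤ k → ℙ {ω | X i ω = 2 ^ k} = 1 / 2 ^ k) :
    ∃ C : ℝ, ∀ n : ℕ, ∀ hn : 1 ≤ n, ∀ j : ℤ, 1 ≤ ⌈logb 2 n⌉ + j →
      |(ℙ {ω | ((Finset.range n).sup'
            (Finset.nonempty_range_iff.mpr (by omega)) fun i => X i ω)
            = (2 : ℝ) ^ (⌈logb 2 n⌉ + j)}).toReal
          - Real.exp (-((n : ℝ) / 2 ^ ⌈logb 2 (n : ℝ)⌉) * 2 ^ (-j))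
            * (1 - Real.exp (-((n : ℝ) / 2 ^ ⌈logb 2 (n : ℝ)⌉) * 2 ^ (-j)))|
        ≤ C / n := by
  refine ⟨216, fun n hn j hj => ?_⟩
  have hne : (Finset.range n).Nonempty := Finset.nonempty_range_iff.mpr (by omega)
  set L : ℤ := ⌈logb 2 (n:ℝ)⌉ with hL
  set M : ℕ := (L + j).toNat with hMdef
  have hM1 : 1 ≤ M := by omega
  have hMm : (M : ℤ) = L + j := Int.toNat_of_nonneg (by omega)
  -- rewrite exponent
  have hc : (2 : ℝ) ^ (L + j) = 2 ^ M := by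
    rw [← hMm, zpow_natCast]
  -- cdf of max
  have hprod : ∀ M' : ℕ,
      ℙ {ω | ((Finset.range n).sup' hne fun i => X i ω) ≤ (2:ℝ) ^ M'}
        = (1 - 2⁻¹ ^ M') ^ n := by
    intro M'
    have hset : {ω | ((Finset.range n).sup' hne fun i => X i ω) ≤ (2:ℝ) ^ M'}
        = ⋂ i ∈ Finset.range n, X i ⁻¹' Set.Iic ((2:ℝ) ^ M') := by
      ext ω; simp [Finset.sup'_le_iff]
    rw [hset, hind.meas_biInter (fun i _ => ⟨Set.Iic ((2:ℝ)^M'), measurableSet_Iic, rfl⟩),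
      Finset.prod_congr rfl (fun i _ => stp_cdf_pow (X i) (hX i) (hpmf i) M'),
      Finset.prod_const, Finset.card_range]
  -- measurability of level sets
  have hmeasLe : ∀ c : ℝ, MeasurableSet {ω | ((Finset.range n).sup' hne fun i => X i ω) ≤ c} := by
    intro c
    have hset : {ω | ((Finset.range n).sup' hne fun i => X i ω) ≤ c}
        = ⋂ i ∈ Finset.range n, X i ⁻¹' Set.Iic c := by
      ext ω; simp [Finset.sup'_le_iff]
    rw [hset]
    exact MeasurableSet.biInter (Finset.range n).countable_toSet
      (fun i _ => (hX i) measurableSet_Iic)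
  -- bad set
  set Bad : Set Ω := ⋃ i ∈ Finset.range n, (⋃ k : ℕ, X i ⁻¹' {(2:ℝ) ^ (k+1)})ᶜ with hBad
  have hBad0 : ℙ Bad = 0 := by
    rw [hBad]
    refine (measure_biUnion_null_iff (Finset.range n).countable_toSet).mpr (fun i _ => ?_)
    have h1 : MeasurableSet (⋃ k : ℕ, X i ⁻¹' {(2:ℝ) ^ (k+1)}) :=
      MeasurableSet.iUnion fun k => (hX i) (measurableSet_singleton _)
    rw [measure_compl h1 (measure_ne_top _ _), stp_union_atoms (X i) (hX i) (hpmf i)]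
    simp
  -- identify the event
  set E : Set Ω := {ω | ((Finset.range n).sup' hne fun i => X i ω) = (2:ℝ) ^ M} with hE
  set D : Set Ω := {ω | ((Finset.range n).sup' hne fun i => X i ω) ≤ (2:ℝ) ^ M}
      \ {ω | ((Finset.range n).sup' hne fun i => X i ω) ≤ (2:ℝ) ^ (M-1)} with hD
  have hED : E ⊆ D := by
    intro ω hω
    have hω' : ((Finset.range n).sup' hne fun i => X i ω) = (2:ℝ) ^ M := hω
    constructor
    · exact le_of_eq hω'
    · simp only [Set.mem_setOf_eq, hω', not_le]
      exact pow_lt_pow_right₀ one_lt_two (by omega)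
  have hDE : D ⊆ E ∪ Bad := by
    intro ω hω
    by_cases hωG : ω ∈ Bad
    · exact Or.inr hωG
    · left
      obtain ⟨h1, h2⟩ := hω
      simp only [Set.mem_setOf_eq, not_le] at h1 h2
      obtain ⟨i0, hi0, hEq⟩ := Finset.exists_mem_eq_sup' hne (fun i => X i ω)
      simp only [hBad, Set.mem_iUnion, Set.mem_compl_iff, not_exists] at hωG
      have hi0' := hωG i0 (by simpa using hi0)
      push_neg at hi0'
      obtain ⟨k, hk⟩ := hi0'
      rw [Set.mem_preimage, Set.mem_singleton_iff] at hk
      have hsup : ((Finset.range n).sup' hne fun i => X i ω) = (2:ℝ) ^ (k+1) := by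
        rw [hEq, hk]
      rw [hsup] at h1 h2
      have hk1 : k + 1 ≤ M := (pow_le_pow_iff_right₀ (one_lt_two : (1:ℝ) < 2)).mp h1
      have hk2 : M - 1 < k + 1 := (pow_lt_pow_iff_right₀ (one_lt_two : (1:ℝ) < 2)).mp h2
      have : k + 1 = M := by omega
      show ((Finset.range n).sup' hne fun i => X i ω) = (2:ℝ) ^ M
      rw [hsup, this]
  have hPE : ℙ E = ℙ D := by
    refine le_antisymm (measure_mono hED) ?_
    calc ℙ D ≤ ℙ (E ∪ Bad) := measure_mono hDE
      _ ≤ ℙ E + ℙ Bad := measure_union_le _ _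
      _ = ℙ E := by rw [hBad0, add_zero]
  have hsub : {ω | ((Finset.range n).sup' hne fun i => X i ω) ≤ (2:ℝ) ^ (M-1)}
      ⊆ {ω | ((Finset.range n).sup' hne fun i => X i ω) ≤ (2:ℝ) ^ M} := by
    intro ω hω
    exact le_trans hω (pow_le_pow_right₀ (one_le_two : (1:ℝ) ≤ 2) (Nat.sub_le M 1))
  have hPD : ℙ D = (1 - 2⁻¹ ^ M) ^ n - (1 - 2⁻¹ ^ (M-1)) ^ n := by
    rw [hD, measure_diff hsub (hmeasLe _).nullMeasurableSet (measure_ne_top _ _),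
      hprod M, hprod (M-1)]
  -- to real
  have htR : ∀ M' : ℕ, ((1 - 2⁻¹ ^ M' : ℝ≥0∞)).toReal = 1 - (2⁻¹:ℝ) ^ M' := by
    intro M'
    rw [ENNReal.toReal_sub_of_le (pow_le_one₀ (by simp) (by simp)) one_ne_top]
    simp [ENNReal.toReal_pow, ENNReal.toReal_inv]
  have hle2 : (1 - 2⁻¹ ^ (M-1) : ℝ≥0∞) ^ n ≤ (1 - 2⁻¹ ^ M) ^ n :=
    pow_le_pow_left' (tsub_le_tsub_left
      (pow_le_pow_right_of_le_one' (ENNReal.inv_le_one.2 one_le_two) (Nat.sub_le M 1)) 1) n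
  have hPEtoReal : (ℙ E).toReal
      = (1 - (2⁻¹:ℝ) ^ M) ^ n - (1 - (2⁻¹:ℝ) ^ (M-1)) ^ n := by
    rw [hPE, hPD, ENNReal.toReal_sub_of_le hle2 (ENNReal.pow_ne_top (by
      exact (tsub_le_self.trans_lt one_lt_top).ne)),
      ENNReal.toReal_pow, ENNReal.toReal_pow, htR, htR]
  -- the exponential argument
  set p : ℝ := (2⁻¹:ℝ) ^ M with hp
  set q : ℝ := (2⁻¹:ℝ) ^ (M-1) with hq
  have harg : -((n:ℝ) / 2 ^ L) * (2:ℝ) ^ (-j) = -((n:ℝ) * p) := by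
    have h1 : ((n:ℝ) / 2 ^ L) * (2:ℝ) ^ (-j) = (n:ℝ) * ((2:ℝ) ^ (L + j))⁻¹ := by
      rw [zpow_add₀ (two_ne_zero) L j, zpow_neg, mul_inv, div_eq_mul_inv, mul_assoc]
    have h2 : ((2:ℝ) ^ (L + j))⁻¹ = p := by
      rw [hc, hp, ← inv_pow]
    rw [neg_mul, h1, h2]
  have hq2p : q = 2 * p := by
    have hM : M - 1 + 1 = M := by omega
    calc q = 2⁻¹ ^ (M-1) := hq
      _ = 2 * (2⁻¹ * 2⁻¹ ^ (M-1)) := by ring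
      _ = 2 * 2⁻¹ ^ (M-1+1) := by rw [pow_succ']
      _ = 2 * p := by rw [hM, ← hp]
  -- final bounds
  have hp0 : (0:ℝ) ≤ p := by positivity
  have hp1 : p ≤ 1 := pow_le_one₀ (by norm_num) (by norm_num)
  have hq0 : (0:ℝ) ≤ q := by positivity
  have hq1 : q ≤ 1 := pow_le_one₀ (by norm_num) (by norm_num)
  obtain ⟨h1le, h1⟩ := stp_approx_key n hn p hp0 hp1
  obtain ⟨h2le, h2⟩ := stp_approx_key n hn q hq0 hq1
  have hexpsq : exp (-((n:ℝ) * p)) * exp (-((n:ℝ) * p)) = exp (-((n:ℝ) * q)) := by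
    rw [← Real.exp_add, hq2p]; ring_nf
  rw [hc, harg]
  have hgoal : (ℙ {ω | ((Finset.range n).sup'
      (Finset.nonempty_range_iff.mpr (by omega : n ≠ 0)) fun i => X i ω)
      = (2:ℝ) ^ M}).toReal = (1 - (2⁻¹:ℝ) ^ M) ^ n - (1 - (2⁻¹:ℝ) ^ (M-1)) ^ n := hPEtoReal
  rw [hgoal]
  rw [mul_one_sub, hexpsq]
  have hn0 : (0:ℝ) < n := by exact_mod_cast hn
  have hsplit : (216:ℝ)/n = 108/n + 108/n := by ring
  rw [abs_le]
  constructor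
  · rw [hsplit]
    have := h1le
    linarith [h2, sub_nonneg.mpr h2le]
  · rw [hsplit]
    linarith [h1, sub_nonneg.mpr h1le, h2le]
end

section
/- Let X^{(k)} be the St. Petersburg variable truncated at 2^k (P{X^{(k)}=2^i}=2^{-i}/(1-2^{-k}), 1 ≤ i ≤ k). Then for all k ≥ 1 and integers ℓ ≥ 2, E(X^{(k)} - E X^{(k)})^ℓ ≤ 2·E(X^{(k)})^ℓ. -/
open MeasureTheory ProbabilityTheory Real

lemma sub_pow_le_add {x μ : ℝ} (hx : 0 ≤ x) (hμ : 0 ≤ μ) (ℓ : ℕ) :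
    (x - μ) ^ ℓ ≤ x ^ ℓ + μ ^ ℓ := by
  rcases le_or_gt μ x with h | h
  · have h1 : (x - μ) ^ ℓ ≤ x ^ ℓ :=
      pow_le_pow_left₀ (by linarith) (by linarith) ℓ
    have : (0:ℝ) ≤ μ ^ ℓ := pow_nonneg hμ ℓ
    linarith
  · rcases Nat.even_or_odd ℓ with he | ho
    · have h1 : (x - μ) ^ ℓ = (μ - x) ^ ℓ := by
        rw [← neg_sub, he.neg_pow]
      have h2 : (μ - x) ^ ℓ ≤ μ ^ ℓ :=
        pow_le_pow_left₀ (by linarith) (by linarith) ℓ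
      have : (0:ℝ) ≤ x ^ ℓ := pow_nonneg hx ℓ
      linarith
    · have h1 : (x - μ) ^ ℓ ≤ 0 := ho.pow_nonpos (by linarith)
      have h2 : (0:ℝ) ≤ x ^ ℓ := pow_nonneg hx ℓ
      have h3 : (0:ℝ) ≤ μ ^ ℓ := pow_nonneg hμ ℓ
      linarith

theorem stmt_17 {Ω : Type*} [MeasureSpace Ω] [IsProbabilityMeasure (ℙ : Measure Ω)]
    (k : ℕ) (hk : 1 ≤ k) (X : Ω → ℝ) (hX : Measurable X)
    (hpmf : ∀ i : ℕ, 1 ≤ i → i ≤ k →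
      (ℙ {ω | X ω = 2 ^ i}).toReal = (2 : ℝ) ^ (-(i : ℤ)) / (1 - 2 ^ (-(k : ℤ))))
    (hsupp : ∀ᵐ ω ∂ℙ, ∃ i : ℕ, 1 ≤ i ∧ i ≤ k ∧ X ω = 2 ^ i) :
    ∀ ℓ : ℕ, 2 ≤ ℓ →
      (∫ ω, (X ω - ∫ ω', X ω' ∂ℙ) ^ ℓ ∂ℙ) ≤ 2 * ∫ ω, (X ω) ^ ℓ ∂ℙ := by
  intro ℓ hℓ
  -- a.e. bounds
  have hbd : ∀ᵐ ω ∂ℙ, 2 ≤ X ω ∧ X ω ≤ 2 ^ k := by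
    filter_upwards [hsupp] with ω ⟨i, hi1, hik, hXω⟩
    constructor
    · rw [hXω]
      calc (2:ℝ) = 2 ^ 1 := (pow_one 2).symm
        _ ≤ 2 ^ i := pow_le_pow_right₀ one_le_two hi1
    · rw [hXω]; exact pow_le_pow_right₀ one_le_two hik
  -- integrability
  have hintX : Integrable X ℙ := by
    refine ⟨hX.aestronglyMeasurable, ?_⟩
    apply HasFiniteIntegral.of_bounded (C := (2:ℝ)^k)
    filter_upwards [hbd] with ω ⟨h1, h2⟩
    rw [Real.norm_eq_abs, abs_of_nonneg (by linarith)]; exact h2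
  have hintXl : Integrable (fun ω => X ω ^ ℓ) ℙ := by
    refine ⟨(hX.pow_const ℓ).aestronglyMeasurable, ?_⟩
    apply HasFiniteIntegral.of_bounded (C := ((2:ℝ)^k)^ℓ)
    filter_upwards [hbd] with ω ⟨h1, h2⟩
    rw [Real.norm_eq_abs, abs_of_nonneg (pow_nonneg (by linarith) ℓ)]
    exact pow_le_pow_left₀ (by linarith) h2 ℓ
  set μ := ∫ ω', X ω' ∂ℙ with hμdef
  have hμ0 : 0 ≤ μ := integral_nonneg_of_ae (by
    filter_upwards [hbd] with ω h
    show (0:ℝ) ≤ X ω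
    linarith [h.1])
  have hintC : Integrable (fun ω => (X ω - μ) ^ ℓ) ℙ := by
    refine ⟨((hX.sub measurable_const).pow_const ℓ).aestronglyMeasurable, ?_⟩
    apply HasFiniteIntegral.of_bounded (C := ((2:ℝ)^k + μ)^ℓ)
    filter_upwards [hbd] with ω ⟨h1, h2⟩
    rw [Real.norm_eq_abs, abs_pow]
    apply pow_le_pow_left₀ (abs_nonneg _)
    rw [abs_sub_le_iff]
    constructor <;> nlinarith [pow_pos (two_pos (α := ℝ)) k]
  -- Jensen: μ ^ ℓ ≤ ∫ X ^ ℓ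
  have hjensen : μ ^ ℓ ≤ ∫ ω, X ω ^ ℓ ∂ℙ := by
    have := (convexOn_pow ℓ).map_integral_le (μ := ℙ) (f := X)
      (continuousOn_pow ℓ) isClosed_Ici
      (by filter_upwards [hbd] with ω h; exact le_trans (by norm_num) h.1)
      hintX (by simpa [Function.comp_def] using hintXl)
    simpa using this
  -- pointwise bound then integrate
  have hmain : (∫ ω, (X ω - μ) ^ ℓ ∂ℙ) ≤ ∫ ω, (X ω ^ ℓ + μ ^ ℓ) ∂ℙ := by
    apply integral_mono_ae hintC (hintXl.add (integrable_const _))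
    filter_upwards [hbd] with ω ⟨h1, h2⟩
    exact sub_pow_le_add (by linarith) hμ0 ℓ
  rw [integral_add hintXl (integrable_const _), integral_const] at hmain
  simp only [measure_univ, probReal_univ, ENNReal.toReal_one, smul_eq_mul, one_mul] at hmain
  linarith
end
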